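/- arXiv:2602.10822 — 4 statements merged into one kernel-verified Lean document; each statement's English description precedes it below -/
import Mathlib

section
/- There exists a universal constant C > 0 such that for all zero-mean h ∈ A¹(𝕋) and V ∈ A³(𝕋), the function I(h,V) with Fourier coefficients Î(k) = Σ_{m∈ℤ} |k| |k−m|³ [sgn(k) sgn(k−m) − tanh(|k|) tanh(|k−m|)] ĥ(m) V̂(k−m) satisfies ‖I(h,V)‖_{A⁰} = Σ_{k∈ℤ} |Î(k)| ≤ C ‖h‖_{A¹} ‖V‖_{A³}. -/
open scoped BigOperators
open MeasureTheory Filter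

noncomputable section

/-- A zero-mean periodic function, identified with its sequence of Fourier coefficients. -/
abbrev Coeffs := ℤ → ℂ

/-- Wiener norm `‖f‖_{A^s} = Σ_k |k|^s |f̂(k)|`. -/
def Anorm (s : ℝ) (f : Coeffs) : ℝ :=
  ∑' k : ℤ, |(k : ℝ)| ^ s * ‖f k‖

/-- Membership in the Wiener space `A^s`. -/
def InA (s : ℝ) (f : Coeffs) : Prop :=
  Summable fun k : ℤ => |(k : ℝ)| ^ s * ‖f k‖

/-- `G₀ = Λ tanh Λ`, the Fourier multiplier with symbol `|k| tanh |k|`. -/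
def G0 (f : Coeffs) : Coeffs := fun k =>
  ((|(k : ℝ)| * Real.tanh |(k : ℝ)| : ℝ) : ℂ) * f k

/-- The `n`-th spatial derivative `∂ₓⁿ`, i.e. the multiplier with symbol `(i k)^n`. -/
def Dx (n : ℕ) (f : Coeffs) : Coeffs := fun k =>
  (Complex.I * (k : ℂ)) ^ n * f k

/-- Product of periodic functions = convolution of Fourier coefficient sequences. -/
def conv (f g : Coeffs) : Coeffs := fun k => ∑' m : ℤ, f m * g (k - m)

/-- `L₀ = 1 - Θ G₀ ∂ₓₓ`, the multiplier with symbol `1 + Θ |k|³ tanh |k|`. -/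
def L0 (Θ : ℝ) (f : Coeffs) : Coeffs := fun k =>
  ((1 + Θ * |(k : ℝ)| ^ (3 : ℕ) * Real.tanh |(k : ℝ)| : ℝ) : ℂ) * f k

/-- `L₀⁻¹`, the multiplier with symbol `(1 + Θ |k|³ tanh |k|)⁻¹`. -/
def L0inv (Θ : ℝ) (f : Coeffs) : Coeffs := fun k =>
  f k / ((1 + Θ * |(k : ℝ)| ^ (3 : ℕ) * Real.tanh |(k : ℝ)| : ℝ) : ℂ)

/-- `I(h,V) = G₀(h · G₀ ∂ₓₓ V) + ∂ₓ(h · ∂ₓₓₓ V)`. -/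
def Iop (h V : Coeffs) : Coeffs := fun k =>
  G0 (conv h (G0 (Dx 2 V))) k + Dx 1 (conv h (Dx 3 V)) k

/-- `I(h,V)` given directly by its Fourier coefficient formula. -/
def IopF (h V : Coeffs) : Coeffs := fun k =>
  ∑' m : ℤ,
    ((|(k : ℝ)| * |((k - m : ℤ) : ℝ)| ^ (3 : ℕ) *
      ((Int.sign k : ℝ) * (Int.sign (k - m) : ℝ) -
        Real.tanh |(k : ℝ)| * Real.tanh |((k - m : ℤ) : ℝ)|) : ℝ) : ℂ) *
      h m * V (k - m)

/-- The sign-interaction part `I_A`. -/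
def IA (h V : Coeffs) : Coeffs := fun k =>
  ∑' m : ℤ,
    ((|(k : ℝ)| * |((k - m : ℤ) : ℝ)| ^ (3 : ℕ) *
      ((Int.sign k : ℝ) * (Int.sign (k - m) : ℝ) - 1) : ℝ) : ℂ) *
      h m * V (k - m)

/-- The smooth-remainder part `I_B`. -/
def IB (h V : Coeffs) : Coeffs := fun k =>
  ∑' m : ℤ,
    ((|(k : ℝ)| * |((k - m : ℤ) : ℝ)| ^ (3 : ℕ) *
      (1 - Real.tanh |(k : ℝ)| * Real.tanh |((k - m : ℤ) : ℝ)|) : ℝ) : ℂ) *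
      h m * V (k - m)

/-- For a given profile `h`, the operator `L_h U = L₀ U + σ Θ I(h,U)`. -/
def Lop (Θ σ : ℝ) (h U : Coeffs) : Coeffs := fun k =>
  L0 Θ U k + ((σ * Θ : ℝ) : ℂ) * Iop h U k

/-- `N(h) = -χ G₀ h + σχ (G₀(h · G₀ h) + ∂ₓ(h · ∂ₓ h))`. -/
def Nop (χ σ : ℝ) (h : Coeffs) : Coeffs := fun k =>
  -(χ : ℂ) * G0 h k +
    ((σ * χ : ℝ) : ℂ) * (G0 (conv h (G0 h)) k + Dx 1 (conv h (Dx 1 h)) k)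

/-- `N_λ(h)`, the weakly nonlinear right-hand side with elasticity. -/
def Nlam (lam χ σ : ℝ) (h : Coeffs) : Coeffs := fun k =>
  -(χ : ℂ) * G0 h k - ((lam / 4 : ℝ) : ℂ) * G0 (Dx 4 h) k
    + ((σ * χ : ℝ) : ℂ) * (G0 (conv h (G0 h)) k + Dx 1 (conv h (Dx 1 h)) k)
    + ((σ * lam / 4 : ℝ) : ℂ) *
        (G0 (conv h (G0 (Dx 4 h))) k + Dx 1 (conv h (Dx 5 h)) k)

/-- Fourier projection onto modes `|k| ≤ N`. -/
def PN (N : ℕ) (f : Coeffs) : Coeffs := fun k => if |k| ≤ (N : ℤ) then f k else 0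

/-- Truncated nonlinearity `F_N(h)` of the Galerkin approximation. -/
def FN (lam χ σ : ℝ) (N : ℕ) (h : Coeffs) : Coeffs := fun k =>
  -(χ : ℂ) * G0 h k - ((lam / 4 : ℝ) : ℂ) * G0 (Dx 4 (PN N h)) k
    + ((σ * χ : ℝ) : ℂ) * (G0 (conv h (G0 h)) k + Dx 1 (conv h (Dx 1 h)) k)
    + ((σ * lam / 4 : ℝ) : ℂ) *
        (G0 (conv h (G0 (Dx 4 (PN N h)))) k + Dx 1 (conv h (Dx 5 (PN N h))) k)

/-- `μ = L₀⁻¹(-χ G₀ h - (λ/4) G₀ ∂ₓ⁴ h)`. -/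
def muOf (lam χ Θ : ℝ) (h : Coeffs) : Coeffs :=
  L0inv Θ (fun k => -(χ : ℂ) * G0 h k - ((lam / 4 : ℝ) : ℂ) * G0 (Dx 4 h) k)

/-- Right-hand side of the second weakly nonlinear model (integrated form). -/
def RHS2 (lam χ Θ σ : ℝ) (h : Coeffs) : Coeffs :=
  L0inv Θ (fun k => Nlam lam χ σ h k - ((σ * Θ : ℝ) : ℂ) *
    (G0 (conv h (G0 (Dx 2 (muOf lam χ Θ h)))) k +
      Dx 1 (conv h (Dx 3 (muOf lam χ Θ h))) k))

/-- Thin-film operator `L_h U = U + √δ Θ ∂ₓ((1+εh) ∂ₓ³ U)`. -/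
def Lthin (δ Θ ε : ℝ) (h U : Coeffs) : Coeffs := fun k =>
  U k + ((Real.sqrt δ * Θ : ℝ) : ℂ) *
    Dx 1 (fun j => Dx 3 U j + (ε : ℂ) * conv h (Dx 3 U) j) k

/-- Thin-film nonlinearity `N_{δ,ε}(h) = √δ ∂ₓ((1+εh) ∂ₓ(χh + (λ/4)∂ₓ⁴h))`. -/
def Nthin (δ ε χ lam : ℝ) (h : Coeffs) : Coeffs :=
  fun k => ((Real.sqrt δ : ℝ) : ℂ) *
    Dx 1 (fun j =>
      Dx 1 (fun m => (χ : ℂ) * h m + ((lam / 4 : ℝ) : ℂ) * Dx 4 h m) j +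
      (ε : ℂ) * conv h (Dx 1 (fun m => (χ : ℂ) * h m + ((lam / 4 : ℝ) : ℂ) * Dx 4 h m)) j) k

/-- Truncated thin-film nonlinearity `N^N_{δ,ε}(h)`. -/
def NthinN (δ ε χ lam : ℝ) (N : ℕ) (h : Coeffs) : Coeffs :=
  fun k => ((Real.sqrt δ : ℝ) : ℂ) *
    Dx 1 (fun j =>
      Dx 1 (fun m => (χ : ℂ) * h m + ((lam / 4 : ℝ) : ℂ) * Dx 4 (PN N h) m) j +
      (ε : ℂ) * conv h (Dx 1 (fun m => (χ : ℂ) * h m + ((lam / 4 : ℝ) : ℂ) * Dx 4 (PN N h) m)) j) k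

/-- Inverse of `L⋆ = I + √δ Θ ∂ₓ⁴`, the multiplier with symbol `(1 + √δ Θ k⁴)⁻¹`. -/
def LstarInv (δ Θ : ℝ) (f : Coeffs) : Coeffs := fun k =>
  f k / ((1 + Real.sqrt δ * Θ * (k : ℝ) ^ (4 : ℕ) : ℝ) : ℂ)

/-- Continuity of a curve of coefficients with respect to the `A^s` norm, on a set `S ⊆ ℝ`. -/
def ContOnA (s : ℝ) (S : Set ℝ) (h : ℝ → Coeffs) : Prop :=
  ∀ t ∈ S, ∀ ε > 0, ∃ δ > 0, ∀ t' ∈ S, |t' - t| < δ →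
    Anorm s (fun k => h t' k - h t k) < ε


lemma tanh_exp (x : ℝ) : Real.tanh x = (Real.exp x - Real.exp (-x)) / (Real.exp x + Real.exp (-x)) := by
  rw [Real.tanh_eq_sinh_div_cosh, Real.sinh_eq, Real.cosh_eq]
  rw [div_div_div_cancel_right₀]
  norm_num

lemma tanh_nonneg' {x : ℝ} (hx : 0 ≤ x) : 0 ≤ Real.tanh x := by
  rw [tanh_exp]
  apply div_nonneg
  · have := Real.exp_le_exp.mpr (neg_le_self hx)
    linarith
  · positivity

lemma tanh_le_one' (x : ℝ) : Real.tanh x ≤ 1 := by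
  rw [tanh_exp, div_le_one (by positivity)]
  have := Real.exp_pos (-x)
  linarith

lemma one_sub_tanh (x : ℝ) : 1 - Real.tanh x ≤ 2 * Real.exp (-(2*x)) := by
  rw [tanh_exp]
  have h1 : (0:ℝ) < Real.exp x + Real.exp (-x) := by positivity
  have h2 : 1 - (Real.exp x - Real.exp (-x)) / (Real.exp x + Real.exp (-x))
      = 2 * Real.exp (-x) / (Real.exp x + Real.exp (-x)) := by
    field_simp; ring
  rw [h2]
  have h3 : 2 * Real.exp (-x) / (Real.exp x + Real.exp (-x)) ≤ 2 * Real.exp (-x) / Real.exp x := by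
    apply div_le_div_of_nonneg_left (by positivity) (Real.exp_pos x)
    have := Real.exp_pos (-x); linarith
  refine h3.trans (le_of_eq ?_)
  rw [mul_div_assoc, ← Real.exp_sub]
  ring_nf

lemma one_sub_tanh_poly {x : ℝ} (hx : 1 ≤ x) : 1 - Real.tanh x ≤ 32 / x^4 := by
  have hx0 : (0:ℝ) < x := by linarith
  have hexp : x^4 / 16 ≤ Real.exp (2*x) := by
    have e1 : Real.exp (2*x) = Real.exp (x/2) ^ 4 := by
      rw [← Real.exp_nat_mul]; norm_num; ring_nf
    have e2 : (x/2)^4 ≤ Real.exp (x/2)^4 := by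
      apply pow_le_pow_left₀ (by positivity)
      have := Real.add_one_le_exp (x/2); linarith
    rw [e1]
    calc x^4/16 = (x/2)^4 := by ring
    _ ≤ _ := e2
  have h2 : Real.exp (-(2*x)) ≤ 16 / x^4 := by
    rw [Real.exp_neg]
    rw [inv_le_comm₀ (Real.exp_pos _) (by positivity)]
    calc (16/x^4)⁻¹ = x^4/16 := by field_simp
    _ ≤ _ := hexp
  calc 1 - Real.tanh x ≤ 2 * Real.exp (-(2*x)) := one_sub_tanh x
  _ ≤ 2 * (16 / x^4) := by linarith
  _ = 32 / x^4 := by ring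

/-- Same-sign case of the symbol bound, in abstract real variables. -/
lemma samesign_bound {a b M ta tb : ℝ} (ha1 : 1 ≤ a) (hb1 : 1 ≤ b) (hm1 : 1 ≤ M)
    (htri : a ≤ M + b) (hta0 : 0 ≤ ta) (htb0 : 0 ≤ tb) (hta1 : ta ≤ 1) (htb1 : tb ≤ 1)
    (hA : a^4 * (1 - ta) ≤ 32) (hB : b^4 * (1 - tb) ≤ 32) :
    a * b^3 * (1 - ta * tb) ≤ 100 * (M * b^3) := by
  have hab3 : (0:ℝ) ≤ a * b^3 := by positivity
  have haa : a ≤ a^4 := le_self_pow₀ (by linarith) (by norm_num)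
  have hbb : b^3 ≤ b^4 := pow_le_pow_right₀ hb1 (by norm_num)
  have hb3 : (1:ℝ) ≤ b^3 := one_le_pow₀ hb1
  have hMb : (1:ℝ) ≤ M * b^3 := by nlinarith
  have key : 1 - ta * tb ≤ (1 - ta) + (1 - tb) := by nlinarith
  have t1 : a * (1 - ta) ≤ 32 := by nlinarith [mul_le_mul_of_nonneg_right haa (sub_nonneg.mpr hta1)]
  have t3 : b^3 * (1 - tb) ≤ 32 := by nlinarith [mul_le_mul_of_nonneg_right hbb (sub_nonneg.mpr htb1)]
  calc a * b^3 * (1 - ta * tb)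
      ≤ a * b^3 * ((1 - ta) + (1 - tb)) := mul_le_mul_of_nonneg_left key hab3
    _ = b^3 * (a * (1 - ta)) + a * (b^3 * (1 - tb)) := by ring
    _ ≤ b^3 * 32 + (M + b) * (b^3 * (1 - tb)) := by
        have h1 : b^3 * (a * (1 - ta)) ≤ b^3 * 32 :=
          mul_le_mul_of_nonneg_left t1 (by positivity)
        have h2 : a * (b^3 * (1 - tb)) ≤ (M + b) * (b^3 * (1 - tb)) :=
          mul_le_mul_of_nonneg_right htri (mul_nonneg (by positivity) (by linarith))
        linarith
    _ = 32 * b^3 + M * (b^3 * (1 - tb)) + b^4 * (1 - tb) := by ring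
    _ ≤ 32 * (M * b^3) + M * b^3 + 32 := by
        have h1 : (32:ℝ) * b^3 ≤ 32 * (M * b^3) := by nlinarith
        have h2 : M * (b^3 * (1 - tb)) ≤ M * b^3 := by nlinarith
        linarith
    _ ≤ 100 * (M * b^3) := by linarith

/-- Opposite-sign case of the symbol bound, in abstract real variables. -/
lemma oppsign_bound {a b M ta tb : ℝ} (hb1 : 1 ≤ b) (hm1 : 1 ≤ M) (haM : a ≤ M)
    (ha0 : 0 ≤ a) (hta0 : 0 ≤ ta) (htb0 : 0 ≤ tb) (hta1 : ta ≤ 1) (htb1 : tb ≤ 1) :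
    a * b^3 * (1 + ta * tb) ≤ 100 * (M * b^3) := by
  have hab3 : (0:ℝ) ≤ a * b^3 := by positivity
  have h1 : a * b^3 * (1 + ta * tb) ≤ a * b^3 * 2 :=
    mul_le_mul_of_nonneg_left (by nlinarith) hab3
  have h2 : a * b^3 ≤ M * b^3 := mul_le_mul_of_nonneg_right haM (by positivity)
  nlinarith

set_option linter.unusedVariables false

lemma weight_bound (k m : ℤ) (hm : m ≠ 0) (hn : k - m ≠ 0) :
    |(|(k:ℝ)| * |((k - m : ℤ):ℝ)| ^ (3:ℕ) *
      ((Int.sign k : ℝ) * (Int.sign (k-m) : ℝ) -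
        Real.tanh |(k:ℝ)| * Real.tanh |((k-m:ℤ):ℝ)|))|
      ≤ 100 * (|(m:ℝ)| * |((k-m:ℤ):ℝ)|^(3:ℕ)) := by
  by_cases hk : k = 0
  · subst hk; simp; positivity
  set a : ℝ := |(k:ℝ)| with hadef
  set b : ℝ := |((k-m:ℤ):ℝ)| with hbdef
  set M : ℝ := |(m:ℝ)| with hMdef
  have ha1 : 1 ≤ a := by
    rw [hadef, ← Int.cast_abs]; exact_mod_cast Int.one_le_abs hk
  have hb1 : 1 ≤ b := by
    rw [hbdef, ← Int.cast_abs]; exact_mod_cast Int.one_le_abs hn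
  have hm1 : 1 ≤ M := by
    rw [hMdef, ← Int.cast_abs]; exact_mod_cast Int.one_le_abs hm
  have htri : a ≤ M + b := by
    rw [hadef, hbdef, hMdef]
    calc |(k:ℝ)| = |(m:ℝ) + ((k-m:ℤ):ℝ)| := by push_cast; ring_nf
    _ ≤ _ := abs_add_le _ _
  have hta0 : 0 ≤ Real.tanh a := tanh_nonneg' (by linarith)
  have htb0 : 0 ≤ Real.tanh b := tanh_nonneg' (by linarith)
  have hta1 : Real.tanh a ≤ 1 := tanh_le_one' a
  have htb1 : Real.tanh b ≤ 1 := tanh_le_one' b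
  have hab3 : (0:ℝ) ≤ a * b^3 := by positivity
  have httb : Real.tanh a * Real.tanh b ≤ 1 := mul_le_one₀ hta1 htb0 htb1
  have habnn : (0:ℝ) ≤ a * b^3 * (1 - Real.tanh a * Real.tanh b) :=
    mul_nonneg hab3 (by linarith)
  have hA : a^4 * (1 - Real.tanh a) ≤ 32 := by
    have := one_sub_tanh_poly ha1
    rw [le_div_iff₀ (by positivity)] at this; linarith [this]
  have hB : b^4 * (1 - Real.tanh b) ≤ 32 := by
    have := one_sub_tanh_poly hb1
    rw [le_div_iff₀ (by positivity)] at this; linarith [this]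
  rcases lt_or_gt_of_ne hk with hkneg | hkpos <;>
    rcases lt_or_gt_of_ne hn with hnneg | hnpos
  -- both negative (same sign)
  case _ =>
    rw [Int.sign_eq_neg_one_of_neg hkneg, Int.sign_eq_neg_one_of_neg hnneg]
    push_cast
    have habs : |a * b^3 * (-1 * -1 - Real.tanh a * Real.tanh b)|
        = a * b^3 * (1 - Real.tanh a * Real.tanh b) := by
      rw [show a * b^3 * (-1 * -1 - Real.tanh a * Real.tanh b) = a * b^3 * (1 - Real.tanh a * Real.tanh b) by ring, abs_of_nonneg habnn]
    rw [habs]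
    exact samesign_bound ha1 hb1 hm1 htri hta0 htb0 hta1 htb1 hA hB
  -- k < 0 < k - m
  case _ =>
    rw [Int.sign_eq_neg_one_of_neg hkneg, Int.sign_eq_one_of_pos hnpos]
    have haM : a ≤ M := by
      rw [hadef, hMdef, abs_of_neg (show ((k:ℝ)) < 0 by exact_mod_cast hkneg),
        abs_of_neg (show ((m:ℝ)) < 0 by exact_mod_cast (show m < 0 by omega))]
      have : m ≤ k := by omega
      have : (m:ℝ) ≤ (k:ℝ) := by exact_mod_cast this
      linarith
    push_cast
    have habs : |a * b^3 * (-1 * 1 - Real.tanh a * Real.tanh b)|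
        = a * b^3 * (1 + Real.tanh a * Real.tanh b) := by
      rw [abs_mul, abs_of_nonneg hab3, abs_of_nonpos (by nlinarith)]
      ring
    rw [habs]
    exact oppsign_bound hb1 hm1 haM (by linarith) hta0 htb0 hta1 htb1
  -- k - m < 0 < k
  case _ =>
    rw [Int.sign_eq_one_of_pos hkpos, Int.sign_eq_neg_one_of_neg hnneg]
    have haM : a ≤ M := by
      rw [hadef, hMdef, abs_of_pos (show (0:ℝ) < (k:ℝ) by exact_mod_cast hkpos),
        abs_of_pos (show (0:ℝ) < (m:ℝ) by exact_mod_cast (show 0 < m by omega))]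
      have : k ≤ m := by omega
      exact_mod_cast this
    push_cast
    have habs : |a * b^3 * (1 * -1 - Real.tanh a * Real.tanh b)|
        = a * b^3 * (1 + Real.tanh a * Real.tanh b) := by
      rw [abs_mul, abs_of_nonneg hab3, abs_of_nonpos (by nlinarith)]
      ring
    rw [habs]
    exact oppsign_bound hb1 hm1 haM (by linarith) hta0 htb0 hta1 htb1
  -- both positive (same sign)
  case _ =>
    rw [Int.sign_eq_one_of_pos hkpos, Int.sign_eq_one_of_pos hnpos]
    push_cast
    have habs : |a * b^3 * (1 * 1 - Real.tanh a * Real.tanh b)|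
        = a * b^3 * (1 - Real.tanh a * Real.tanh b) := by
      rw [show a * b^3 * (1 * 1 - Real.tanh a * Real.tanh b) = a * b^3 * (1 - Real.tanh a * Real.tanh b) by ring, abs_of_nonneg habnn]
    rw [habs]
    exact samesign_bound ha1 hb1 hm1 htri hta0 htb0 hta1 htb1 hA hB

lemma abs_nonneg' (z : ℂ) : 0 ≤ ‖z‖ := norm_nonneg _

/-- the symbol-cancellation estimate
`‖I(h,V)‖_{A⁰} ≤ C ‖h‖_{A¹} ‖V‖_{A³}` for zero-mean `h ∈ A¹` and `V ∈ A³`,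
where `I(h,V)` is given by its Fourier coefficient formula. -/
theorem I_commutator_bound :
    ∃ C > 0, ∀ h V : Coeffs, h 0 = 0 → V 0 = 0 → InA 1 h → InA 3 V →
      (∑' k : ℤ, ‖IopF h V k‖) ≤ C * Anorm 1 h * Anorm 3 V := by
  refine ⟨100, by norm_num, ?_⟩
  intro h V h0 V0 hh hV
  classical
  set F : ℤ → ℝ := fun m => |(m:ℝ)| * ‖h m‖ with hFdef
  set G : ℤ → ℝ := fun n => |(n:ℝ)|^(3:ℕ) * ‖V n‖ with hGdef
  have hFnn : ∀ m, 0 ≤ F m := fun m => mul_nonneg (abs_nonneg _) (abs_nonneg' _)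
  have hGnn : ∀ n, 0 ≤ G n := fun n => mul_nonneg (by positivity) (abs_nonneg' _)
  have hF : Summable F := hh.congr fun k => by rw [Real.rpow_one]
  have hG : Summable G := hV.congr fun k => by
    rw [show (3:ℝ) = ((3:ℕ):ℝ) by norm_num, Real.rpow_natCast]
  have hA1 : Anorm 1 h = ∑' m, F m := tsum_congr fun m => by rw [Real.rpow_one]
  have hA3 : Anorm 3 V = ∑' n, G n := tsum_congr fun n => by
    rw [show (3:ℝ) = ((3:ℕ):ℝ) by norm_num, Real.rpow_natCast]
  -- the dominating function on ℤ × ℤ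
  set g : ℤ × ℤ → ℝ := fun p => 100 * (F p.2 * G (p.1 - p.2)) with hgdef
  have hgnn : ∀ p, 0 ≤ g p := fun p => by
    have := hFnn p.2; have := hGnn (p.1 - p.2); positivity
  set e : ℤ × ℤ ≃ ℤ × ℤ :=
    ⟨fun q => (q.1 + q.2, q.1), fun p => (p.2, p.1 - p.2),
      fun q => by simp, fun p => by simp⟩ with hedef
  have hprod : Summable (fun q : ℤ × ℤ => F q.1 * G q.2) :=
    hF.mul_of_nonneg hG hFnn hGnn
  have hsum0 : Summable fun p : ℤ × ℤ => F p.2 * G (p.1 - p.2) := by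
    apply e.summable_iff.mp
    have : ((fun p : ℤ × ℤ => F p.2 * G (p.1 - p.2)) ∘ e)
        = fun q : ℤ × ℤ => F q.1 * G q.2 := by
      funext q; simp [hedef]
    rw [this]; exact hprod
  have hg : Summable g := hsum0.mul_left 100
  -- pointwise bound on the summand
  have Bnn : ∀ p : ℤ × ℤ, 0 ≤ ‖(((|(p.1:ℝ)| * |((p.1 - p.2 : ℤ):ℝ)| ^ (3:ℕ) *
        ((Int.sign p.1 : ℝ) * (Int.sign (p.1 - p.2) : ℝ) -
          Real.tanh |(p.1:ℝ)| * Real.tanh |((p.1 - p.2:ℤ):ℝ)|) : ℝ)) : ℂ) *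
        h p.2 * V (p.1 - p.2)‖ := fun p => abs_nonneg' _
  have key : ∀ p : ℤ × ℤ, ‖(((|(p.1:ℝ)| * |((p.1 - p.2 : ℤ):ℝ)| ^ (3:ℕ) *
        ((Int.sign p.1 : ℝ) * (Int.sign (p.1 - p.2) : ℝ) -
          Real.tanh |(p.1:ℝ)| * Real.tanh |((p.1 - p.2:ℤ):ℝ)|) : ℝ)) : ℂ) *
        h p.2 * V (p.1 - p.2)‖ ≤ g p := by
    rintro ⟨k, m⟩
    rw [norm_mul, norm_mul, Complex.norm_real, Real.norm_eq_abs]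
    by_cases hm0 : m = 0
    · subst hm0; rw [h0]
      simpa using hgnn (k, 0)
    by_cases hn0 : k - m = 0
    · rw [hn0]; simp
      exact hgnn (k, m)
    have hw := weight_bound k m hm0 hn0
    -- direct: |w| * |h m| * |V (k-m)| ≤ 100 |m| |k-m|³ |h m| |V(k-m)| = g (k,m)
    calc |(|(k:ℝ)| * |((k - m : ℤ):ℝ)| ^ (3:ℕ) *
          ((Int.sign k : ℝ) * (Int.sign (k-m) : ℝ) -
            Real.tanh |(k:ℝ)| * Real.tanh |((k-m:ℤ):ℝ)|))| *
          ‖h m‖ * ‖V (k - m)‖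
        ≤ (100 * (|(m:ℝ)| * |((k-m:ℤ):ℝ)|^(3:ℕ))) *
          ‖h m‖ * ‖V (k - m)‖ := by
          apply mul_le_mul_of_nonneg_right _ (abs_nonneg' _)
          exact mul_le_mul_of_nonneg_right hw (abs_nonneg' _)
      _ = g (k, m) := by rw [hgdef, hFdef, hGdef]; ring
  -- summability of the full double family
  have hBsum : Summable fun p : ℤ × ℤ => ‖(((|(p.1:ℝ)| * |((p.1 - p.2 : ℤ):ℝ)| ^ (3:ℕ) *
        ((Int.sign p.1 : ℝ) * (Int.sign (p.1 - p.2) : ℝ) -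
          Real.tanh |(p.1:ℝ)| * Real.tanh |((p.1 - p.2:ℤ):ℝ)|) : ℝ)) : ℂ) *
        h p.2 * V (p.1 - p.2)‖ :=
    Summable.of_nonneg_of_le Bnn key hg
  have hgslices : ∀ k, Summable fun m => g (k, m) := fun k => hg.prod_factor k
  have hgmarg : Summable fun k => ∑' m, g (k, m) :=
    ((summable_prod_of_nonneg hgnn).mp hg).2
  -- inner estimate for each k
  have inner : ∀ k : ℤ, ‖IopF h V k‖ ≤ ∑' m, g (k, m) := by
    intro k
    have hBk : Summable fun m => ‖(((|(k:ℝ)| * |((k - m : ℤ):ℝ)| ^ (3:ℕ) *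
          ((Int.sign k : ℝ) * (Int.sign (k - m) : ℝ) -
            Real.tanh |(k:ℝ)| * Real.tanh |((k - m:ℤ):ℝ)|) : ℝ)) : ℂ) *
          h m * V (k - m)‖ := hBsum.prod_factor k
    calc ‖IopF h V k‖
        = ‖IopF h V k‖ := rfl
      _ ≤ ∑' m, ‖(((|(k:ℝ)| * |((k - m : ℤ):ℝ)| ^ (3:ℕ) *
            ((Int.sign k : ℝ) * (Int.sign (k - m) : ℝ) -
              Real.tanh |(k:ℝ)| * Real.tanh |((k - m:ℤ):ℝ)|) : ℝ) : ℂ)) *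
            h m * V (k - m)‖ := by
          apply norm_tsum_le_tsum_norm
          exact hBk
      _ ≤ ∑' m, g (k, m) := by
          apply Summable.tsum_le_tsum _ hBk (hgslices k)
          intro m
          exact key (k, m)
  -- outer estimate
  have houter : Summable fun k => ‖IopF h V k‖ :=
    Summable.of_nonneg_of_le (fun k => abs_nonneg' _) inner hgmarg
  calc (∑' k : ℤ, ‖IopF h V k‖)
      ≤ ∑' k, ∑' m, g (k, m) := Summable.tsum_le_tsum inner houter hgmarg
    _ = ∑' p : ℤ × ℤ, g p := (Summable.tsum_prod' hg hgslices).symm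
    _ = 100 * ∑' p : ℤ × ℤ, F p.2 * G (p.1 - p.2) := tsum_mul_left
    _ = 100 * ∑' q : ℤ × ℤ, F q.1 * G q.2 := by
        congr 1
        rw [← e.tsum_eq (fun p : ℤ × ℤ => F p.2 * G (p.1 - p.2))]
        apply tsum_congr; intro q
        simp [hedef]
    _ = 100 * ((∑' m, F m) * (∑' n, G n)) := by
        congr 1
        exact (Summable.tsum_mul_tsum hF hG hprod).symm
    _ = 100 * Anorm 1 h * Anorm 3 V := by rw [hA1, hA3]; ring
end
end

section
/- For all zero-mean h ∈ A¹(𝕋) and V ∈ A³(𝕋), the sign-interaction part I_A with Fourier coefficients Î_A(k) = Σ_{m∈ℤ} |k| |k−m|³ (sgn(k) sgn(k−m) − 1) ĥ(m) V̂(k−m) satisfies Σ_{k∈ℤ} |Î_A(k)| ≤ 2 ‖h‖_{A¹} ‖V‖_{A³}. (The proof uses that sgn(k) sgn(k−m) − 1 vanishes unless sgn(k) ≠ sgn(k−m), in which case |k| ≤ |m|.) -/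
open scoped BigOperators
open MeasureTheory Filter

noncomputable section

lemma key_ineq (k m : ℤ) :
    |(|(k:ℝ)| * |((k-m:ℤ):ℝ)| ^ (3:ℕ) * ((Int.sign k : ℝ) * (Int.sign (k-m) : ℝ) - 1))|
      ≤ 2 * (|(m:ℝ)| * (|((k-m:ℤ):ℝ)| ^ (3:ℕ))) := by
  have hp : (0:ℝ) ≤ |((k-m:ℤ):ℝ)| ^ (3:ℕ) := by positivity
  rcases eq_or_ne k 0 with rfl | hk
  · simp
    all_goals positivity
  rcases eq_or_ne (k - m) 0 with hkm | hkm
  · rw [hkm]; simp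
    all_goals positivity
  have hsk : Int.sign k = 1 ∨ Int.sign k = -1 := by
    rcases lt_trichotomy k 0 with h | h | h
    · exact Or.inr (Int.sign_eq_neg_one_iff_neg.mpr h)
    · exact absurd h hk
    · exact Or.inl (Int.sign_eq_one_iff_pos.mpr h)
  have hskm : Int.sign (k-m) = 1 ∨ Int.sign (k-m) = -1 := by
    rcases lt_trichotomy (k-m) 0 with h | h | h
    · exact Or.inr (Int.sign_eq_neg_one_iff_neg.mpr h)
    · exact absurd h hkm
    · exact Or.inl (Int.sign_eq_one_iff_pos.mpr h)
  have habs : |(k:ℝ)| ≤ |(m:ℝ)| ∨ ((Int.sign k : ℝ) * (Int.sign (k-m) : ℝ) - 1) = 0 := by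
    rcases hsk with h1 | h1 <;> rcases hskm with h2 | h2
    · right; rw [h1, h2]; norm_num
    · left
      have hk' : 0 < k := Int.sign_eq_one_iff_pos.mp h1
      have hkm' : k - m < 0 := Int.sign_eq_neg_one_iff_neg.mp h2
      have h3 : |k| ≤ |m| := by
        rw [abs_of_pos hk', abs_of_pos (by omega : (0:ℤ) < m)]; omega
      calc |(k:ℝ)| = ((|k| : ℤ) : ℝ) := by push_cast; ring
        _ ≤ ((|m| : ℤ) : ℝ) := by exact_mod_cast h3
        _ = |(m:ℝ)| := by push_cast; ring
    · left
      have hk' : k < 0 := Int.sign_eq_neg_one_iff_neg.mp h1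
      have hkm' : 0 < k - m := Int.sign_eq_one_iff_pos.mp h2
      have h3 : |k| ≤ |m| := by
        rw [abs_of_neg hk', abs_of_neg (by omega : m < 0)]; omega
      calc |(k:ℝ)| = ((|k| : ℤ) : ℝ) := by push_cast; ring
        _ ≤ ((|m| : ℤ) : ℝ) := by exact_mod_cast h3
        _ = |(m:ℝ)| := by push_cast; ring
    · right; rw [h1, h2]; norm_num
  rcases habs with habs | hz
  · have hsbound : |(Int.sign k : ℝ) * (Int.sign (k-m) : ℝ) - 1| ≤ 2 := by
      rcases hsk with h1 | h1 <;> rcases hskm with h2 | h2 <;> rw [h1, h2] <;> norm_num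
    rw [abs_mul, abs_mul, abs_abs, abs_of_nonneg hp]
    have c1 := mul_le_mul_of_nonneg_left hsbound (mul_nonneg (abs_nonneg ((k:ℝ))) hp)
    have c2 := mul_le_mul_of_nonneg_right habs hp
    linarith
  · rw [hz]; simp
    all_goals positivity

/-- the sign-interaction part satisfies
`Σ_k |Î_A(k)| ≤ 2 ‖h‖_{A¹} ‖V‖_{A³}` for zero-mean `h ∈ A¹`, `V ∈ A³`. -/
theorem IA_bound (h V : Coeffs) (hh0 : h 0 = 0) (hV0 : V 0 = 0)
    (hh : InA 1 h) (hV : InA 3 V) :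
    (∑' k : ℤ, ‖IA h V k‖) ≤ 2 * Anorm 1 h * Anorm 3 V := by
  classical
  set a : ℤ → ℝ := fun m => |(m:ℝ)| * ‖h m‖ with ha_def
  set b : ℤ → ℝ := fun j => |(j:ℝ)| ^ (3:ℕ) * ‖V j‖ with hb_def
  have ha : Summable a := by
    have := hh
    unfold InA at this
    simpa [ha_def, Real.rpow_one] using this
  have hb : Summable b := by
    have := hV
    unfold InA at this
    have e : ∀ k : ℤ, |(k:ℝ)| ^ (3:ℝ) = |(k:ℝ)| ^ (3:ℕ) := fun k => by
      rw [← Real.rpow_natCast |(k:ℝ)| 3]; norm_num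
    simpa [hb_def, e] using this
  have hA1 : Anorm 1 h = ∑' m, a m := by
    unfold Anorm; simp [ha_def, Real.rpow_one]
  have hA3 : Anorm 3 V = ∑' j, b j := by
    unfold Anorm
    have e : ∀ k : ℤ, |(k:ℝ)| ^ (3:ℝ) = |(k:ℝ)| ^ (3:ℕ) := fun k => by
      rw [← Real.rpow_natCast |(k:ℝ)| 3]; norm_num
    simp [hb_def, e]
  have ha0 : ∀ m, 0 ≤ a m := fun m => by positivity
  have hb0 : ∀ j, 0 ≤ b j := fun j => by positivity
  -- summability of the product on ℤ × ℤ
  have hprod : Summable (fun p : ℤ × ℤ => a p.1 * b p.2) :=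
    ha.mul_of_nonneg hb ha0 hb0
  -- shear equivalence
  let e : ℤ × ℤ ≃ ℤ × ℤ :=
    ⟨fun p => (p.1 + p.2, p.1), fun q => (q.2, q.1 - q.2),
      fun p => by simp, fun q => by simp⟩
  have hF : Summable (fun p : ℤ × ℤ => a p.2 * b (p.1 - p.2)) := by
    have : (fun p : ℤ × ℤ => a p.2 * b (p.1 - p.2)) ∘ e
        = fun p : ℤ × ℤ => a p.1 * b p.2 := by
      funext p; simp [e]
    exact (e.summable_iff).mp (this ▸ hprod)
  have hFsum : ∑' p : ℤ × ℤ, a p.2 * b (p.1 - p.2) = (∑' m, a m) * (∑' j, b j) := by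
    rw [← e.tsum_eq (fun p : ℤ × ℤ => a p.2 * b (p.1 - p.2))]
    have : (fun p : ℤ × ℤ => a ((e p).2) * b ((e p).1 - (e p).2))
        = fun p : ℤ × ℤ => a p.1 * b p.2 := by
      funext p; simp [e]
    calc ∑' p : ℤ × ℤ, a ((e p).2) * b ((e p).1 - (e p).2)
        = ∑' p : ℤ × ℤ, a p.1 * b p.2 := by rw [this]
      _ = ∑' m, ∑' j, a m * b j := Summable.tsum_prod' hprod (fun m => hprod.prod_factor m)
      _ = ∑' m, a m * ∑' j, b j := by
          congr 1; funext m; exact tsum_mul_left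
      _ = (∑' m, a m) * (∑' j, b j) := tsum_mul_right
  -- pointwise bound on terms
  have hterm : ∀ k m : ℤ,
      ‖((|(k : ℝ)| * |((k - m : ℤ) : ℝ)| ^ (3 : ℕ) *
        ((Int.sign k : ℝ) * (Int.sign (k - m) : ℝ) - 1) : ℝ) : ℂ) *
          h m * V (k - m)‖ ≤ 2 * (a m * b (k - m)) := by
    intro k m
    rw [norm_mul, norm_mul, Complex.norm_real, Real.norm_eq_abs]
    have h1 := key_ineq k m
    have h2 : ‖h m‖ * ‖V (k - m)‖ ≥ 0 := by positivity
    calc |(|(k:ℝ)| * |((k-m:ℤ):ℝ)| ^ (3:ℕ) *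
            ((Int.sign k : ℝ) * (Int.sign (k-m) : ℝ) - 1))|
          * ‖h m‖ * ‖V (k - m)‖
        ≤ (2 * (|(m:ℝ)| * (|((k-m:ℤ):ℝ)| ^ (3:ℕ))))
          * ‖h m‖ * ‖V (k - m)‖ := by
          apply mul_le_mul_of_nonneg_right (mul_le_mul_of_nonneg_right h1 (by positivity))
            (by positivity)
      _ = 2 * (a m * b (k - m)) := by simp [ha_def, hb_def]; ring
  -- summability of slices
  have hF2 : Summable (fun p : ℤ × ℤ => 2 * (a p.2 * b (p.1 - p.2))) := hF.mul_left 2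
  have hslice : ∀ k : ℤ, Summable (fun m : ℤ => 2 * (a m * b (k - m))) :=
    fun k => hF2.prod_factor k
  have hIAk : ∀ k : ℤ, ‖IA h V k‖ ≤ ∑' m, 2 * (a m * b (k - m)) := by
    intro k
    unfold IA
    have hsum : Summable (fun m : ℤ =>
        ‖((|(k : ℝ)| * |((k - m : ℤ) : ℝ)| ^ (3 : ℕ) *
          ((Int.sign k : ℝ) * (Int.sign (k - m) : ℝ) - 1) : ℝ) : ℂ) *
            h m * V (k - m)‖) := by
      apply (hslice k).of_nonneg_of_le (fun m => norm_nonneg _)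
      intro m
      simpa using hterm k m
    calc ‖∑' m : ℤ,
          ((|(k : ℝ)| * |((k - m : ℤ) : ℝ)| ^ (3 : ℕ) *
            ((Int.sign k : ℝ) * (Int.sign (k - m) : ℝ) - 1) : ℝ) : ℂ) *
              h m * V (k - m)‖
        ≤ ∑' m : ℤ, ‖((|(k : ℝ)| * |((k - m : ℤ) : ℝ)| ^ (3 : ℕ) *
            ((Int.sign k : ℝ) * (Int.sign (k - m) : ℝ) - 1) : ℝ) : ℂ) *
              h m * V (k - m)‖ := by
          simpa using norm_tsum_le_tsum_norm hsum
      _ ≤ ∑' m : ℤ, 2 * (a m * b (k - m)) := by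
          apply Summable.tsum_le_tsum _ hsum (hslice k)
          intro m
          simpa using hterm k m
  have houter : Summable (fun k : ℤ => ∑' m, 2 * (a m * b (k - m))) :=
    ((summable_prod_of_nonneg (fun p => by positivity)).mp hF2).2
  have hLHS : Summable (fun k : ℤ => ‖IA h V k‖) :=
    houter.of_nonneg_of_le (fun k => norm_nonneg _) hIAk
  calc (∑' k : ℤ, ‖IA h V k‖)
      ≤ ∑' k : ℤ, ∑' m : ℤ, 2 * (a m * b (k - m)) := Summable.tsum_le_tsum hIAk hLHS houter
    _ = ∑' p : ℤ × ℤ, 2 * (a p.2 * b (p.1 - p.2)) := (Summable.tsum_prod' hF2 (fun k => hF2.prod_factor k)).symm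
    _ = 2 * ((∑' m, a m) * (∑' j, b j)) := by
        rw [← hFsum]; exact tsum_mul_left
    _ = 2 * Anorm 1 h * Anorm 3 V := by rw [hA1, hA3]; ring
end
end

section
/- There exists a universal constant C > 0 such that for all zero-mean h ∈ A¹(𝕋) and V ∈ A³(𝕋), the smooth-remainder part I_B with Fourier coefficients Î_B(k) = Σ_{m∈ℤ} |k| |k−m|³ (1 − tanh(|k|) tanh(|k−m|)) ĥ(m) V̂(k−m) satisfies Σ_{k∈ℤ} |Î_B(k)| ≤ C (‖h‖_{A¹} + ‖h‖_{A⁰}) ‖V‖_{A³}. -/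
open scoped BigOperators
open MeasureTheory Filter

noncomputable section

lemma mytanh_nonneg {t : ℝ} (ht : 0 ≤ t) : 0 ≤ Real.tanh t := by
  rw [Real.tanh_eq_sinh_div_cosh]
  exact div_nonneg (Real.sinh_nonneg_iff.2 ht) (Real.cosh_pos t).le

lemma mytanh_le_one (t : ℝ) : Real.tanh t ≤ 1 := by
  rw [Real.tanh_eq_sinh_div_cosh, div_le_one (Real.cosh_pos t)]
  nlinarith [Real.cosh_sub_sinh t, Real.exp_pos (-t)]

lemma mykey {t : ℝ} (ht : 0 ≤ t) : t * (1 - Real.tanh t) ≤ 1 := by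
  have hc := Real.cosh_pos t
  have h1 : 1 - Real.tanh t = Real.exp (-t) / Real.cosh t := by
    rw [Real.tanh_eq_sinh_div_cosh, ← Real.cosh_sub_sinh t]
    field_simp
  rw [h1]
  have h2 : t * (Real.exp (-t) / Real.cosh t) ≤ t * Real.exp (-t) :=
    mul_le_mul_of_nonneg_left
      (div_le_self (Real.exp_nonneg _) (Real.one_le_cosh t)) ht
  refine h2.trans ?_
  rw [Real.exp_neg, ← div_eq_mul_inv, div_le_one (Real.exp_pos t)]
  linarith [Real.add_one_le_exp t]

lemma coef_le (k m : ℤ) :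
    |(k:ℝ)| * (1 - Real.tanh |(k:ℝ)| * Real.tanh |((k-m:ℤ):ℝ)|) ≤ 2*(1+|(m:ℝ)|) := by
  set x := |(k:ℝ)| with hxdef
  set y := |((k-m:ℤ):ℝ)| with hydef
  have hx : 0 ≤ x := abs_nonneg _
  have hy : 0 ≤ y := abs_nonneg _
  have hm : 0 ≤ |(m:ℝ)| := abs_nonneg _
  have hxy : x ≤ y + |(m:ℝ)| := by
    rw [hxdef, hydef]
    push_cast
    calc |(k:ℝ)| = |((k:ℝ)-m) + m| := by ring_nf
    _ ≤ |(k:ℝ)-m| + |(m:ℝ)| := abs_add_le _ _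
  have htx0 := mytanh_nonneg hx
  have hty0 := mytanh_nonneg hy
  have htx1 := mytanh_le_one x
  have hty1 := mytanh_le_one y
  nlinarith [mykey hx, mykey hy, mul_nonneg hx (sub_nonneg.2 hty1),
    mul_le_mul_of_nonneg_right hxy (sub_nonneg.2 hty1)]

/-- the smooth-remainder part satisfies
`Σ_k |Î_B(k)| ≤ C (‖h‖_{A¹} + ‖h‖_{A⁰}) ‖V‖_{A³}` for zero-mean `h ∈ A¹`, `V ∈ A³`. -/
theorem IB_bound :
    ∃ C > 0, ∀ h V : Coeffs, h 0 = 0 → V 0 = 0 → InA 1 h → InA 3 V →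
      (∑' k : ℤ, ‖IB h V k‖) ≤ C * (Anorm 1 h + Anorm 0 h) * Anorm 3 V := by
  refine ⟨2, by norm_num, ?_⟩
  intro h V h0 V0 hh hV
  -- summability of the weights
  set A : ℤ → ℝ := fun m => (1 + |(m:ℝ)|) * ‖h m‖ with hA
  set B : ℤ → ℝ := fun n => |(n:ℝ)|^(3:ℕ) * ‖V n‖ with hB
  have hh1 : Summable (fun m : ℤ => |(m:ℝ)| * ‖h m‖) := by
    have := hh; unfold InA at this; simpa [Real.rpow_one] using this
  have hh0 : Summable (fun m : ℤ => ‖h m‖) := by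
    refine Summable.of_nonneg_of_le (fun m => norm_nonneg _) (fun m => ?_) hh1
    rcases eq_or_ne m 0 with rfl | hm
    · simp [h0]
    · have : (1:ℝ) ≤ |(m:ℝ)| := by
        have : (1:ℤ) ≤ |m| := Int.one_le_abs hm
        calc (1:ℝ) = ((1:ℤ):ℝ) := by norm_num
        _ ≤ ((|m|:ℤ):ℝ) := by exact_mod_cast this
        _ = |(m:ℝ)| := by push_cast; ring
      nlinarith [norm_nonneg (h m)]
  have hAsum : Summable A := by
    have := hh0.add hh1
    refine this.congr fun m => ?_
    simp [hA]; ring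
  have hBsum : Summable B := by
    have := hV; unfold InA at this
    refine this.congr fun n => ?_
    rw [hB]
    congr 1
    rw [← Real.rpow_natCast |(n:ℝ)| 3]
    norm_num
  have hAnn : ∀ m, 0 ≤ A m := fun m =>
    mul_nonneg (by positivity) (norm_nonneg _)
  have hBnn : ∀ n, 0 ≤ B n :=
    fun n => mul_nonneg (by positivity) (norm_nonneg _)
  -- the dominating function on pairs
  set e : ℤ × ℤ ≃ ℤ × ℤ :=
    ⟨fun p => (p.2, p.1 - p.2), fun q => (q.1 + q.2, q.1),
      fun p => by simp, fun q => by simp⟩ with he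
  have hbase : Summable (fun q : ℤ × ℤ => 2 * A q.1 * B q.2) := by
    have := (Summable.mul_of_nonneg hAsum hBsum hAnn hBnn).mul_left 2
    exact this.congr fun q => by ring
  set F : ℤ × ℤ → ℝ := fun p => 2 * A p.2 * B (p.1 - p.2) with hF
  have hFsum : Summable F := by
    have : F = (fun q : ℤ × ℤ => 2 * A q.1 * B q.2) ∘ e := rfl
    rw [this]
    exact (Equiv.summable_iff e).2 hbase
  -- pointwise coefficient bound
  have hterm : ∀ k m : ℤ,
      ‖((|(k : ℝ)| * |((k - m : ℤ) : ℝ)| ^ (3 : ℕ) *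
        (1 - Real.tanh |(k : ℝ)| * Real.tanh |((k - m : ℤ) : ℝ)|) : ℝ) : ℂ) *
        h m * V (k - m)‖ ≤ F (k, m) := by
    intro k m
    have htle : Real.tanh |(k:ℝ)| * Real.tanh |((k-m:ℤ):ℝ)| ≤ 1 := by
      nlinarith [mytanh_nonneg (abs_nonneg ((k:ℝ))),
        mytanh_nonneg (abs_nonneg (((k-m:ℤ)):ℝ)),
        mytanh_le_one |(k:ℝ)|, mytanh_le_one |((k-m:ℤ):ℝ)|]
    have hc0 : 0 ≤ |(k : ℝ)| * |((k - m : ℤ) : ℝ)| ^ (3 : ℕ) *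
        (1 - Real.tanh |(k : ℝ)| * Real.tanh |((k - m : ℤ) : ℝ)|) := by
      have := sub_nonneg.2 htle
      positivity
    rw [norm_mul, norm_mul, Complex.norm_real, Real.norm_eq_abs, abs_of_nonneg hc0]
    have hcb : |(k : ℝ)| * |((k - m : ℤ) : ℝ)| ^ (3 : ℕ) *
        (1 - Real.tanh |(k : ℝ)| * Real.tanh |((k - m : ℤ) : ℝ)|)
        ≤ 2*(1+|(m:ℝ)|) * |((k - m : ℤ) : ℝ)| ^ (3 : ℕ) := by
      have := mul_le_mul_of_nonneg_right (coef_le k m)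
        (pow_nonneg (abs_nonneg (((k-m:ℤ)):ℝ)) 3)
      calc |(k : ℝ)| * |((k - m : ℤ) : ℝ)| ^ (3 : ℕ) *
          (1 - Real.tanh |(k : ℝ)| * Real.tanh |((k - m : ℤ) : ℝ)|)
          = |(k:ℝ)| * (1 - Real.tanh |(k:ℝ)| * Real.tanh |((k-m:ℤ):ℝ)|) *
            |((k - m : ℤ) : ℝ)| ^ (3 : ℕ) := by ring
        _ ≤ 2*(1+|(m:ℝ)|) * |((k - m : ℤ) : ℝ)| ^ (3 : ℕ) := this
    calc |(k : ℝ)| * |((k - m : ℤ) : ℝ)| ^ (3 : ℕ) *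
        (1 - Real.tanh |(k : ℝ)| * Real.tanh |((k - m : ℤ) : ℝ)|) *
        ‖h m‖ * ‖V (k - m)‖
        ≤ 2*(1+|(m:ℝ)|) * |((k - m : ℤ) : ℝ)| ^ (3 : ℕ) *
          ‖h m‖ * ‖V (k - m)‖ := by
          have h1 : 0 ≤ ‖h m‖ := norm_nonneg _
          have h2 : 0 ≤ ‖V (k-m)‖ := norm_nonneg _
          exact mul_le_mul_of_nonneg_right
            (mul_le_mul_of_nonneg_right hcb h1) h2
      _ = F (k, m) := by simp only [hF, hA, hB]; ring
  -- fiberwise sums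
  have hfib : ∀ k : ℤ, Summable fun m => F (k, m) := fun k => hFsum.prod_factor k
  have hnormsum : ∀ k : ℤ, Summable fun m : ℤ =>
      ‖((|(k : ℝ)| * |((k - m : ℤ) : ℝ)| ^ (3 : ℕ) *
        (1 - Real.tanh |(k : ℝ)| * Real.tanh |((k - m : ℤ) : ℝ)|) : ℝ) : ℂ) *
        h m * V (k - m)‖ := fun k =>
    Summable.of_nonneg_of_le (fun m => norm_nonneg _)
      (fun m => hterm k m) (hfib k)
  have hIBk : ∀ k : ℤ, ‖IB h V k‖ ≤ ∑' m, F (k, m) := by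
    intro k
    have h1 : ‖IB h V k‖ ≤ ∑' m : ℤ,
        ‖((|(k : ℝ)| * |((k - m : ℤ) : ℝ)| ^ (3 : ℕ) *
          (1 - Real.tanh |(k : ℝ)| * Real.tanh |((k - m : ℤ) : ℝ)|) : ℝ) : ℂ) *
          h m * V (k - m)‖ := by
      exact norm_tsum_le_tsum_norm (hnormsum k)
    exact h1.trans (Summable.tsum_le_tsum (hterm k) (hnormsum k) (hfib k))
  have hG : HasSum (fun k => ∑' m, F (k, m)) (∑' p, F p) :=
    (hFsum.hasSum).prod_fiberwise fun k => (hfib k).hasSum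
  have hGsum : Summable (fun k => ∑' m, F (k, m)) := hG.summable
  have hIBsum : Summable (fun k => ‖IB h V k‖) :=
    Summable.of_nonneg_of_le (fun k => norm_nonneg _) hIBk hGsum
  calc (∑' k : ℤ, ‖IB h V k‖) ≤ ∑' k, ∑' m, F (k, m) :=
        Summable.tsum_le_tsum hIBk hIBsum hGsum
    _ = ∑' p : ℤ × ℤ, F p := hG.tsum_eq
    _ = ∑' q : ℤ × ℤ, 2 * A q.1 * B q.2 :=
        Equiv.tsum_eq e (fun q : ℤ × ℤ => 2 * A q.1 * B q.2)
    _ = 2 * ((∑' m, A m) * (∑' n, B n)) := by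
        rw [Summable.tsum_prod' hbase fun m => (hbase.prod_factor m)]
        simp_rw [tsum_mul_left, tsum_mul_right]
        rw [tsum_mul_left]
        ring
    _ = 2 * (Anorm 1 h + Anorm 0 h) * Anorm 3 V := by
        have hAeq : (∑' m, A m) = Anorm 1 h + Anorm 0 h := by
          unfold Anorm
          simp only [Real.rpow_one, Real.rpow_zero, one_mul]
          rw [← Summable.tsum_add hh1 hh0]
          apply tsum_congr; intro m
          show (1 + |(m:ℝ)|) * ‖h m‖ = _
          ring
        have hBeq : (∑' n, B n) = Anorm 3 V := by
          unfold Anorm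
          apply tsum_congr; intro n
          show |(n:ℝ)|^(3:ℕ) * ‖V n‖ = |(n:ℝ)|^(3:ℝ) * ‖V n‖
          congr 1
          rw [← Real.rpow_natCast |(n:ℝ)| 3]
          norm_num
        rw [hAeq, hBeq]; ring
end
end

section
/- Fix χ, Θ, σ > 0. There exist constants 𝒞 > 0 and C > 0, depending only on χ, Θ, σ, such that for every zero-mean h ∈ A¹(𝕋) with ‖h‖_{A¹} ≤ 𝒞, there exists a unique zero-mean U ∈ A³(𝕋) satisfying L_h U = N(h), and this U obeys the bound ‖U‖_{A⁰} + (Θ tanh(1)/2) ‖U‖_{A³} ≤ C ‖h‖_{A¹} (1 + ‖h‖_{A¹}). -/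
open scoped BigOperators
open MeasureTheory Filter

noncomputable section

namespace EllAux

/-! ### Hyperbolic function facts -/

lemma tanh_nonneg {x : ℝ} (h : 0 ≤ x) : 0 ≤ Real.tanh x := by
  rw [Real.tanh_eq_sinh_div_cosh]
  exact div_nonneg (Real.sinh_nonneg_iff.mpr h) (Real.cosh_pos _).le

lemma tanh_lt_one (x : ℝ) : Real.tanh x < 1 := by
  rw [Real.tanh_eq_sinh_div_cosh, div_lt_one (Real.cosh_pos _)]
  exact Real.sinh_lt_cosh x

lemma tanh_mono {a b : ℝ} (h : a ≤ b) : Real.tanh a ≤ Real.tanh b := by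
  rw [Real.tanh_eq_sinh_div_cosh, Real.tanh_eq_sinh_div_cosh,
    div_le_div_iff₀ (Real.cosh_pos _) (Real.cosh_pos _)]
  have : Real.sinh (a - b) ≤ 0 := by
    rw [show (0:ℝ) = Real.sinh 0 by simp]
    exact Real.sinh_le_sinh.mpr (by linarith)
  rw [Real.sinh_sub] at this
  linarith

lemma one_sub_tanh_mul_tanh (a b : ℝ) :
    1 - Real.tanh a * Real.tanh b = Real.cosh (a - b) / (Real.cosh a * Real.cosh b) := by
  rw [Real.tanh_eq_sinh_div_cosh, Real.tanh_eq_sinh_div_cosh, Real.cosh_sub]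
  field_simp

lemma symb_nonneg (a b : ℝ) : 0 ≤ 1 - Real.tanh a * Real.tanh b := by
  rw [one_sub_tanh_mul_tanh]
  positivity

lemma cosh_ge_half_exp_abs (x : ℝ) : Real.exp |x| / 2 ≤ Real.cosh x := by
  rw [Real.cosh_eq]
  rcases abs_cases x with ⟨h, _⟩ | ⟨h, _⟩ <;> rw [h] <;>
    [skip; rw [show -x = -(x) by ring]] <;>
    nlinarith [Real.exp_pos x, Real.exp_pos (-x)]

lemma cosh_le_exp_abs (x : ℝ) : Real.cosh x ≤ Real.exp |x| := by
  rw [Real.cosh_eq]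
  rcases abs_cases x with ⟨h, h2⟩ | ⟨h, h2⟩ <;> rw [h] <;>
    [nlinarith [Real.exp_le_exp.mpr (show -x ≤ x by linarith)];
     nlinarith [Real.exp_le_exp.mpr (show x ≤ -x by linarith)]]

lemma cosh_mul_cosh_ge (a b : ℝ) : Real.cosh (a - b) ≤ 2 * (Real.cosh a * Real.cosh b) := by
  have h1 := Real.cosh_add a b
  have h2 := Real.cosh_sub a b
  have h3 : 0 < Real.cosh (a + b) := Real.cosh_pos _
  nlinarith

/-- The key symbol bound: `|k| (1 - tanh k tanh (k-m)) ≤ 4 |m|` for integer `m ≠ 0`. -/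
lemma key_bound (k m : ℤ) (hm : m ≠ 0) :
    |(k:ℝ)| * (1 - Real.tanh (k:ℝ) * Real.tanh ((k:ℝ) - (m:ℝ))) ≤ 4 * |(m:ℝ)| := by
  set a := |(k:ℝ)| with ha
  set b := |(m:ℝ)| with hb
  have hb1 : 1 ≤ b := by
    rw [hb, ← Int.cast_abs]
    exact_mod_cast Int.one_le_abs hm
  have hsymb := one_sub_tanh_mul_tanh (k:ℝ) ((k:ℝ) - (m:ℝ))
  rw [show (k:ℝ) - ((k:ℝ) - (m:ℝ)) = (m:ℝ) by ring] at hsymb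
  rw [hsymb]
  have hck : 0 < Real.cosh (k:ℝ) := Real.cosh_pos _
  have hcj : 0 < Real.cosh ((k:ℝ) - (m:ℝ)) := Real.cosh_pos _
  have hcm : 0 < Real.cosh (m:ℝ) := Real.cosh_pos _
  rw [mul_div_assoc', div_le_iff₀ (by positivity)]
  rcases le_or_gt a (2 * b) with hcase | hcase
  · -- |k| ≤ 2|m| : use cosh k cosh j ≥ cosh m / 2
    have h2 : Real.cosh ((k:ℝ) - ((k:ℝ) - (m:ℝ))) ≤
        2 * (Real.cosh (k:ℝ) * Real.cosh ((k:ℝ) - (m:ℝ))) := cosh_mul_cosh_ge _ _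
    rw [show (k:ℝ) - ((k:ℝ) - (m:ℝ)) = (m:ℝ) by ring] at h2
    nlinarith
  · -- |k| > 2|m|
    have hj : a - b ≤ |(k:ℝ) - (m:ℝ)| := by
      have := abs_sub_abs_le_abs_sub (k:ℝ) (m:ℝ)
      linarith [this]
    have e1 : Real.exp a / 2 ≤ Real.cosh (k:ℝ) := by
      have := cosh_ge_half_exp_abs (k:ℝ); rwa [← ha] at this
    have e2 : Real.exp (a - b) / 2 ≤ Real.cosh ((k:ℝ) - (m:ℝ)) := by
      calc Real.exp (a-b)/2 ≤ Real.exp |(k:ℝ) - (m:ℝ)| / 2 := by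
            have := Real.exp_le_exp.mpr hj; linarith
        _ ≤ _ := cosh_ge_half_exp_abs _
    have e3 : Real.cosh (m:ℝ) ≤ Real.exp b := cosh_le_exp_abs _
    -- suffices : a * exp b ≤ 4 b * (exp a / 2) * (exp (a-b) / 2) = b * exp(2a - b)
    have hexp : Real.exp a * Real.exp (a - b) = Real.exp (2*a - b) := by
      rw [← Real.exp_add]; ring_nf
    have hkey : a ≤ b * Real.exp (2*a - 2*b) := by
      have h1 : a ≤ Real.exp a := by linarith [Real.add_one_le_exp a]
      have h2 : Real.exp a ≤ Real.exp (2*a - 2*b) := Real.exp_le_exp.mpr (by linarith)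
      nlinarith [Real.exp_pos (2*a - 2*b)]
    have hfin : a * Real.exp b ≤ b * Real.exp (2*a - b) := by
      have : b * Real.exp (2*a - 2*b) * Real.exp b = b * Real.exp (2*a - b) := by
        rw [mul_assoc, ← Real.exp_add]; ring_nf
      nlinarith [Real.exp_pos b, Real.exp_pos (2*a-2*b)]
    calc a * Real.cosh (m:ℝ) ≤ a * Real.exp b := by
          have h0 : 0 ≤ a := abs_nonneg _
          nlinarith
      _ ≤ b * Real.exp (2*a - b) := hfin
      _ = 4 * b * (Real.exp a / 2 * (Real.exp (a-b) / 2)) := by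
          rw [show Real.exp a / 2 * (Real.exp (a-b)/2) = Real.exp a * Real.exp (a-b) / 4 by ring,
            hexp]; ring
      _ ≤ 4 * b * (Real.cosh (k:ℝ) * Real.cosh ((k:ℝ) - (m:ℝ))) := by
          have h4 : (0:ℝ) ≤ 4 * b := by linarith
          have := mul_le_mul e1 e2 (by positivity) hck.le
          nlinarith

end EllAux



namespace EllAux

def shEq : ℤ × ℤ ≃ ℤ × ℤ :=
  ⟨fun p => (p.1 + p.2, p.2), fun p => (p.1 - p.2, p.2),
   fun p => by simp, fun p => by simp⟩

lemma conv_summable {a b : ℤ → ℝ} (hsa : Summable a) (hsb : Summable b)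
    (ha0 : ∀ m, 0 ≤ a m) (hb0 : ∀ j, 0 ≤ b j) :
    Summable (fun p : ℤ × ℤ => a p.2 * b (p.1 - p.2)) ∧
    ∑' p : ℤ × ℤ, a p.2 * b (p.1 - p.2) = (∑' m, a m) * (∑' j, b j) := by
  have hs : Summable (fun q : ℤ × ℤ => b q.1 * a q.2) :=
    hsb.mul_of_nonneg hsa hb0 ha0
  have hcomp : (fun p : ℤ × ℤ => a p.2 * b (p.1 - p.2)) ∘ shEq
      = fun q : ℤ × ℤ => b q.1 * a q.2 := by
    funext q
    simp only [Function.comp_apply, shEq, Equiv.coe_fn_mk]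
    rw [show q.1 + q.2 - q.2 = q.1 by ring]
    ring
  have hsum : Summable (fun p : ℤ × ℤ => a p.2 * b (p.1 - p.2)) := by
    rw [← shEq.summable_iff, hcomp]
    exact hs
  refine ⟨hsum, ?_⟩
  have h1 : ∑' p : ℤ × ℤ, a p.2 * b (p.1 - p.2) = ∑' q : ℤ × ℤ, b q.1 * a q.2 := by
    rw [← shEq.tsum_eq (fun p : ℤ × ℤ => a p.2 * b (p.1 - p.2))]
    exact tsum_congr fun q => congrFun hcomp q
  rw [h1, Summable.tsum_prod' hs fun i => hs.prod_factor i]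
  calc ∑' i, ∑' j, b i * a j = ∑' i, b i * ∑' j, a j := by
        exact tsum_congr fun i => tsum_mul_left
    _ = (∑' m, a m) * (∑' j, b j) := by rw [tsum_mul_right]; ring

/-- Master convolution estimate. -/
lemma est0 (F : ℤ → ℤ → ℂ) (a b : ℤ → ℝ) (hsa : Summable a) (hsb : Summable b)
    (ha0 : ∀ m, 0 ≤ a m) (hb0 : ∀ j, 0 ≤ b j)
    (hF : ∀ k m, ‖F k m‖ ≤ a m * b (k - m)) :
    (∀ k, Summable fun m => F k m) ∧
    Summable (fun k => ‖∑' m, F k m‖) ∧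
    ∑' k, ‖∑' m, F k m‖ ≤ (∑' m, a m) * (∑' j, b j) := by
  obtain ⟨hP, hPsum⟩ := conv_summable hsa hsb ha0 hb0
  have hfib : ∀ k, Summable fun m => a m * b (k - m) := fun k => hP.prod_factor k
  have hnrm : ∀ k, Summable fun m => ‖F k m‖ := fun k =>
    Summable.of_nonneg_of_le (fun m => norm_nonneg _) (fun m => hF k m) (hfib k)
  have hsumm : ∀ k, Summable fun m => F k m := by
    intro k
    apply Summable.of_norm
    exact hnrm k
  have hQ : Summable fun k => ∑' m, a m * b (k - m) :=
    ((summable_prod_of_nonneg (fun p => mul_nonneg (ha0 _) (hb0 _))).mp hP).2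
  have hbd : ∀ k, ‖∑' m, F k m‖ ≤ ∑' m, a m * b (k - m) := by
    intro k
    have h1 : ‖∑' m, F k m‖ ≤ ∑' m, ‖F k m‖ :=
      norm_tsum_le_tsum_norm (by exact hnrm k)
    exact h1.trans (Summable.tsum_le_tsum (fun m => hF k m) (hnrm k) (hfib k))
  have hS : Summable (fun k => ‖∑' m, F k m‖) :=
    Summable.of_nonneg_of_le (fun k => norm_nonneg _) hbd hQ
  refine ⟨hsumm, hS, ?_⟩
  calc ∑' k, ‖∑' m, F k m‖ ≤ ∑' k, ∑' m, a m * b (k - m) :=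
        Summable.tsum_le_tsum hbd hS hQ
    _ = ∑' p : ℤ × ℤ, a p.2 * b (p.1 - p.2) := (Summable.tsum_prod' hP (fun i => hP.prod_factor i)).symm
    _ = (∑' m, a m) * (∑' j, b j) := hPsum

end EllAux

namespace EllAux

lemma gsym_eq (x : ℝ) : |x| * Real.tanh |x| = x * Real.tanh x := by
  rcases abs_cases x with ⟨h, _⟩ | ⟨h, _⟩ <;> rw [h] <;> simp [Real.tanh_neg]

/-- symbol for the cubic-order interaction -/
def symb3 (k m : ℤ) : ℝ :=
  (k:ℝ) * ((k:ℝ)-(m:ℝ))^(3:ℕ) * (1 - Real.tanh (k:ℝ) * Real.tanh ((k:ℝ)-(m:ℝ)))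

/-- symbol for the first-order interaction -/
def symb1 (k m : ℤ) : ℝ :=
  (k:ℝ) * ((k:ℝ)-(m:ℝ)) * (1 - Real.tanh (k:ℝ) * Real.tanh ((k:ℝ)-(m:ℝ)))

lemma symb3_bound (k m : ℤ) (hm : m ≠ 0) :
    |symb3 k m| ≤ 4 * |(m:ℝ)| * |(k:ℝ)-(m:ℝ)|^(3:ℕ) := by
  have h0 := symb_nonneg (k:ℝ) ((k:ℝ)-(m:ℝ))
  have hk := key_bound k m hm
  rw [symb3, abs_mul, abs_mul, abs_of_nonneg h0, abs_pow]
  calc |(k:ℝ)| * |(k:ℝ)-(m:ℝ)|^(3:ℕ) * (1 - Real.tanh (k:ℝ) * Real.tanh ((k:ℝ)-(m:ℝ)))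
      = (|(k:ℝ)| * (1 - Real.tanh (k:ℝ) * Real.tanh ((k:ℝ)-(m:ℝ)))) * |(k:ℝ)-(m:ℝ)|^(3:ℕ) := by
        ring
    _ ≤ (4 * |(m:ℝ)|) * |(k:ℝ)-(m:ℝ)|^(3:ℕ) :=
        mul_le_mul_of_nonneg_right hk (by positivity)
    _ = 4 * |(m:ℝ)| * |(k:ℝ)-(m:ℝ)|^(3:ℕ) := by ring

lemma symb1_bound (k m : ℤ) (hm : m ≠ 0) :
    |symb1 k m| ≤ 4 * |(m:ℝ)| * |(k:ℝ)-(m:ℝ)| := by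
  have h0 := symb_nonneg (k:ℝ) ((k:ℝ)-(m:ℝ))
  have hk := key_bound k m hm
  rw [symb1, abs_mul, abs_mul, abs_of_nonneg h0]
  calc |(k:ℝ)| * |(k:ℝ)-(m:ℝ)| * (1 - Real.tanh (k:ℝ) * Real.tanh ((k:ℝ)-(m:ℝ)))
      = (|(k:ℝ)| * (1 - Real.tanh (k:ℝ) * Real.tanh ((k:ℝ)-(m:ℝ)))) * |(k:ℝ)-(m:ℝ)| := by ring
    _ ≤ (4 * |(m:ℝ)|) * |(k:ℝ)-(m:ℝ)| := mul_le_mul_of_nonneg_right hk (abs_nonneg _)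
    _ = _ := by ring

lemma gsym_le (j : ℝ) : |j| * Real.tanh |j| ≤ |j| := by
  nlinarith [abs_nonneg j, (tanh_lt_one |j|).le, tanh_nonneg (abs_nonneg j)]

lemma gsym_nonneg (j : ℝ) : 0 ≤ |j| * Real.tanh |j| :=
  mul_nonneg (abs_nonneg _) (tanh_nonneg (abs_nonneg _))

/-- Representation of `Iop` as a single symbol series. -/
lemma Iop_repr (h U : Coeffs) (hh : Summable fun m => ‖h m‖)
    (B : ℝ) (hB : ∀ j : ℤ, |(j:ℝ)|^(3:ℕ) * ‖U j‖ ≤ B) (k : ℤ) :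
    Iop h U k = ∑' m, ((symb3 k m : ℝ) : ℂ) * (h m * U (k - m)) := by
  have hg2 : ∀ j : ℤ, G0 (Dx 2 U) j
      = (((|(j:ℝ)| * Real.tanh |(j:ℝ)|) * (-(j:ℝ)^2) : ℝ) : ℂ) * U j := by
    intro j
    simp only [G0, Dx]
    have h1 : (Complex.I * (j:ℂ))^2 = ((-(j:ℝ)^2 : ℝ) : ℂ) := by
      push_cast
      rw [mul_pow, Complex.I_sq]
      ring
    rw [h1]
    push_cast
    ring
  have hd3 : ∀ j : ℤ, Dx 3 U j = (Complex.I * (j:ℂ))^3 * U j := fun j => rfl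
  have habs2 : ∀ j : ℤ, ‖(((|(j:ℝ)| * Real.tanh |(j:ℝ)|) * (-(j:ℝ)^2) : ℝ) : ℂ) * U j‖
      ≤ B := by
    intro j
    rw [norm_mul, Complex.norm_real, Real.norm_eq_abs]
    calc |(|(j:ℝ)| * Real.tanh |(j:ℝ)|) * (-(j:ℝ)^2)| * ‖U j‖
        ≤ |(j:ℝ)|^(3:ℕ) * ‖U j‖ := by
          apply mul_le_mul_of_nonneg_right _ (norm_nonneg _)
          rw [abs_mul, abs_of_nonneg (gsym_nonneg _),
            show |(-(j:ℝ)^2)| = |(j:ℝ)|^2 by rw [abs_neg, abs_pow, sq_abs, ← sq_abs]]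
          calc (|(j:ℝ)| * Real.tanh |(j:ℝ)|) * |(j:ℝ)|^2 ≤ |(j:ℝ)| * |(j:ℝ)|^2 :=
                mul_le_mul_of_nonneg_right (gsym_le _) (by positivity)
            _ = |(j:ℝ)|^(3:ℕ) := by ring
      _ ≤ B := hB j
  have habs3 : ∀ j : ℤ, ‖(Complex.I * (j:ℂ))^3 * U j‖ ≤ B := by
    intro j
    rw [norm_mul, norm_pow, norm_mul, Complex.norm_I, Complex.norm_intCast, one_mul]
    have hc : (|(j:ℝ)|)^(3:ℕ) * ‖U j‖ ≤ B := hB j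
    have he : (|(j:ℝ)|)^(3:ℕ) = |(j:ℝ)|^3 := rfl
    calc |(j:ℝ)|^3 * ‖U j‖ = |(j:ℝ)|^(3:ℕ) * ‖U j‖ := by rw [he]
      _ ≤ B := hB j
  have hsum1 : Summable fun m => h m * G0 (Dx 2 U) (k - m) := by
    apply Summable.of_norm
    refine Summable.of_nonneg_of_le (fun m => norm_nonneg _) ?_ (hh.mul_right B)
    intro m
    rw [norm_mul, hg2 (k - m)]
    exact mul_le_mul_of_nonneg_left (habs2 (k-m)) (norm_nonneg _)
  have hsum2 : Summable fun m => h m * Dx 3 U (k - m) := by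
    apply Summable.of_norm
    refine Summable.of_nonneg_of_le (fun m => norm_nonneg _) ?_ (hh.mul_right B)
    intro m
    rw [norm_mul, hd3 (k - m)]
    exact mul_le_mul_of_nonneg_left (habs3 (k-m)) (norm_nonneg _)
  have expand : Iop h U k
      = ∑' m, (((|(k:ℝ)| * Real.tanh |(k:ℝ)| : ℝ):ℂ) * (h m * G0 (Dx 2 U) (k - m))
          + (Complex.I * (k:ℂ)) * (h m * Dx 3 U (k - m))) := by
    have e1 : Iop h U k = ((|(k:ℝ)| * Real.tanh |(k:ℝ)| : ℝ):ℂ) * conv h (G0 (Dx 2 U)) k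
        + (Complex.I * (k:ℂ)) * conv h (Dx 3 U) k := by
      rw [Iop, show Dx 1 (conv h (Dx 3 U)) k
        = (Complex.I * (k:ℂ))^1 * conv h (Dx 3 U) k from rfl, pow_one]
      rfl
    rw [e1, conv, conv, ← tsum_mul_left, ← tsum_mul_left,
      ← Summable.tsum_add ((hsum1.mul_left _)) ((hsum2.mul_left _))]
  rw [expand]
  apply tsum_congr
  intro m
  rw [hg2 (k - m), hd3 (k - m)]
  have hcr : ((k - m : ℤ) : ℝ) = (k:ℝ) - (m:ℝ) := by push_cast; ring
  have hreal : (|(k:ℝ)| * Real.tanh |(k:ℝ)|) *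
      ((|((k-m:ℤ):ℝ)| * Real.tanh |((k-m:ℤ):ℝ)|) * (-((k-m:ℤ):ℝ)^2))
      + (k:ℝ) * ((k-m:ℤ):ℝ)^3 = symb3 k m := by
    rw [gsym_eq, gsym_eq, hcr, symb3]
    ring
  have h2 : ((symb3 k m : ℝ):ℂ)
      = ((|(k:ℝ)| * Real.tanh |(k:ℝ)| : ℝ):ℂ) *
        (((|((k-m:ℤ):ℝ)| * Real.tanh |((k-m:ℤ):ℝ)|) * (-((k-m:ℤ):ℝ)^2) : ℝ):ℂ)
        + ((k:ℤ):ℂ) * ((k - m : ℤ):ℂ)^3 := by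
    rw [← hreal]
    push_cast
    ring
  have hI4 : (Complex.I * ((k:ℤ):ℂ)) * (Complex.I * ((k - m : ℤ):ℂ))^3
      = ((k:ℤ):ℂ) * ((k - m:ℤ):ℂ)^3 := by
    calc (Complex.I * ((k:ℤ):ℂ)) * (Complex.I * ((k - m : ℤ):ℂ))^3
        = (Complex.I^2)^2 * (((k:ℤ):ℂ) * ((k - m:ℤ):ℂ)^3) := by ring
      _ = _ := by rw [Complex.I_sq]; ring
  rw [h2]
  linear_combination (h m * U (k - m)) * hI4

end EllAux

namespace EllAux

/-- Representation of the quadratic part of `Nop`. -/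
lemma Nquad_repr (h : Coeffs) (hh : Summable fun m => ‖h m‖)
    (B : ℝ) (hB : ∀ j : ℤ, |(j:ℝ)| * ‖h j‖ ≤ B) (k : ℤ) :
    G0 (conv h (G0 h)) k + Dx 1 (conv h (Dx 1 h)) k
      = ∑' m, ((- symb1 k m : ℝ) : ℂ) * (h m * h (k - m)) := by
  have hg : ∀ j : ℤ, G0 h j = ((|(j:ℝ)| * Real.tanh |(j:ℝ)| : ℝ) : ℂ) * h j := fun j => rfl
  have hd : ∀ j : ℤ, Dx 1 h j = (Complex.I * (j:ℂ)) * h j := by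
    intro j; rw [Dx, pow_one]
  have habsg : ∀ j : ℤ, ‖G0 h j‖ ≤ B := by
    intro j
    rw [hg j, norm_mul, Complex.norm_real, Real.norm_eq_abs, abs_of_nonneg (gsym_nonneg _)]
    exact le_trans (mul_le_mul_of_nonneg_right (gsym_le _) (norm_nonneg _)) (hB j)
  have habsd : ∀ j : ℤ, ‖Dx 1 h j‖ ≤ B := by
    intro j
    rw [hd j, norm_mul, norm_mul, Complex.norm_I, Complex.norm_intCast, one_mul]
    have : |((j:ℤ):ℝ)| = |(j:ℝ)| := by push_cast; ring
    rw [this]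
    exact hB j
  have hsum1 : Summable fun m => h m * G0 h (k - m) := by
    apply Summable.of_norm
    refine Summable.of_nonneg_of_le (fun m => norm_nonneg _) ?_ (hh.mul_right B)
    intro m
    rw [norm_mul]
    exact mul_le_mul_of_nonneg_left (habsg (k-m)) (norm_nonneg _)
  have hsum2 : Summable fun m => h m * Dx 1 h (k - m) := by
    apply Summable.of_norm
    refine Summable.of_nonneg_of_le (fun m => norm_nonneg _) ?_ (hh.mul_right B)
    intro m
    rw [norm_mul]
    exact mul_le_mul_of_nonneg_left (habsd (k-m)) (norm_nonneg _)
  have e1 : G0 (conv h (G0 h)) k + Dx 1 (conv h (Dx 1 h)) k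
      = ((|(k:ℝ)| * Real.tanh |(k:ℝ)| : ℝ):ℂ) * conv h (G0 h) k
        + (Complex.I * (k:ℂ)) * conv h (Dx 1 h) k := by
    rw [show Dx 1 (conv h (Dx 1 h)) k
      = (Complex.I * (k:ℂ))^1 * conv h (Dx 1 h) k from rfl, pow_one]
    rfl
  rw [e1, conv, conv, ← tsum_mul_left, ← tsum_mul_left,
    ← Summable.tsum_add ((hsum1.mul_left _)) ((hsum2.mul_left _))]
  apply tsum_congr
  intro m
  rw [hg (k - m), hd (k - m)]
  have hcr : ((k - m : ℤ) : ℝ) = (k:ℝ) - (m:ℝ) := by push_cast; ring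
  have hreal : (|(k:ℝ)| * Real.tanh |(k:ℝ)|) * (|((k-m:ℤ):ℝ)| * Real.tanh |((k-m:ℤ):ℝ)|)
      - (k:ℝ) * ((k-m:ℤ):ℝ) = - symb1 k m := by
    rw [gsym_eq, gsym_eq, hcr, symb1]
    ring
  have h2 : ((- symb1 k m : ℝ):ℂ)
      = ((|(k:ℝ)| * Real.tanh |(k:ℝ)| : ℝ):ℂ) *
          ((|((k-m:ℤ):ℝ)| * Real.tanh |((k-m:ℤ):ℝ)| : ℝ):ℂ)
        - ((k:ℤ):ℂ) * ((k - m : ℤ):ℂ) := by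
    rw [← hreal]
    push_cast
    ring
  have hI2 : (Complex.I * ((k:ℤ):ℂ)) * (Complex.I * ((k - m : ℤ):ℂ))
      = -(((k:ℤ):ℂ) * ((k - m:ℤ):ℂ)) := by
    calc (Complex.I * ((k:ℤ):ℂ)) * (Complex.I * ((k - m : ℤ):ℂ))
        = Complex.I^2 * (((k:ℤ):ℂ) * ((k - m:ℤ):ℂ)) := by ring
      _ = _ := by rw [Complex.I_sq]; ring
  rw [h2]
  linear_combination (h m * h (k - m)) * hI2

/-! ### Weights -/

/-- The weight `w(k) = 1 + (Θ tanh 1 / 2) |k|³`. -/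
def wt (Θ : ℝ) (k : ℤ) : ℝ := 1 + Θ * Real.tanh 1 / 2 * |(k:ℝ)|^(3:ℕ)

lemma tanh_one_pos : 0 < Real.tanh 1 := by
  rw [Real.tanh_eq_sinh_div_cosh]
  exact div_pos (by rw [show (0:ℝ) = Real.sinh 0 by simp]; exact Real.sinh_lt_sinh.mpr one_pos)
    (Real.cosh_pos _)

lemma one_le_wt {Θ : ℝ} (hΘ : 0 < Θ) (k : ℤ) : 1 ≤ wt Θ k := by
  have := tanh_one_pos
  have : 0 ≤ Θ * Real.tanh 1 / 2 * |(k:ℝ)|^(3:ℕ) := by positivity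
  rw [wt]; linarith

lemma wt_pos {Θ : ℝ} (hΘ : 0 < Θ) (k : ℤ) : 0 < wt Θ k :=
  lt_of_lt_of_le one_pos (one_le_wt hΘ k)

lemma cube_le_wt {Θ : ℝ} (hΘ : 0 < Θ) (k : ℤ) :
    |(k:ℝ)|^(3:ℕ) ≤ 2 / (Θ * Real.tanh 1) * wt Θ k := by
  have ht := tanh_one_pos
  rw [wt, div_mul_eq_mul_div, le_div_iff₀ (by positivity)]
  nlinarith [pow_nonneg (abs_nonneg ((k:ℝ))) 3]

/-- denominator of `L0inv` -/
lemma L0den_pos {Θ : ℝ} (hΘ : 0 < Θ) (k : ℤ) :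
    0 < 1 + Θ * |(k:ℝ)|^(3:ℕ) * Real.tanh |(k:ℝ)| := by
  have h1 : 0 ≤ Θ * |(k:ℝ)|^(3:ℕ) * Real.tanh |(k:ℝ)| := by
    have := tanh_nonneg (abs_nonneg ((k:ℝ)))
    positivity
  linarith

lemma wt_le_den {Θ : ℝ} (hΘ : 0 < Θ) (k : ℤ) :
    wt Θ k ≤ 3/2 * (1 + Θ * |(k:ℝ)|^(3:ℕ) * Real.tanh |(k:ℝ)|) := by
  rcases eq_or_ne k 0 with rfl | hk
  · norm_num [wt, Real.tanh_zero]
  · have h1 : (1:ℝ) ≤ |(k:ℝ)| := by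
      rw [← Int.cast_abs]
      exact_mod_cast Int.one_le_abs hk
    have h2 : Real.tanh 1 ≤ Real.tanh |(k:ℝ)| := tanh_mono h1
    have h3 : 0 ≤ |(k:ℝ)|^(3:ℕ) := by positivity
    have h4 : Θ * Real.tanh 1 / 2 * |(k:ℝ)|^(3:ℕ)
        ≤ Θ * |(k:ℝ)|^(3:ℕ) * Real.tanh |(k:ℝ)| / 2 := by
      have h7 := mul_le_mul_of_nonneg_left h2 (mul_nonneg hΘ.le h3)
      linarith
    have h5 := tanh_nonneg (abs_nonneg ((k:ℝ)))
    have h6 : 0 ≤ Θ * |(k:ℝ)|^(3:ℕ) * Real.tanh |(k:ℝ)| := by positivity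
    rw [wt]
    linarith

lemma L0inv_abs {Θ : ℝ} (hΘ : 0 < Θ) (f : Coeffs) (k : ℤ) :
    ‖L0inv Θ f k‖
      = ‖f k‖ / (1 + Θ * |(k:ℝ)|^(3:ℕ) * Real.tanh |(k:ℝ)|) := by
  rw [L0inv, norm_div, Complex.norm_real, Real.norm_eq_abs, abs_of_pos (L0den_pos hΘ k)]

/-- The `L0inv` gain estimate, pointwise. -/
lemma L0inv_wt_le {Θ : ℝ} (hΘ : 0 < Θ) (f : Coeffs) (k : ℤ) :
    wt Θ k * ‖L0inv Θ f k‖ ≤ 3/2 * ‖f k‖ := by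
  rw [L0inv_abs hΘ]
  have hd := L0den_pos hΘ k
  rw [mul_div_assoc', div_le_iff₀ hd]
  have := wt_le_den hΘ k
  nlinarith [norm_nonneg (f k)]

/-- The `L0inv` gain estimate, summed. -/
lemma L0inv_gain {Θ : ℝ} (hΘ : 0 < Θ) (f : Coeffs)
    (hf : Summable fun k => ‖f k‖) :
    Summable (fun k => wt Θ k * ‖L0inv Θ f k‖) ∧
    ∑' k, wt Θ k * ‖L0inv Θ f k‖ ≤ 3/2 * ∑' k, ‖f k‖ := by
  have hs : Summable (fun k => wt Θ k * ‖L0inv Θ f k‖) := by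
    refine Summable.of_nonneg_of_le
      (fun k => mul_nonneg (wt_pos hΘ k).le (norm_nonneg _))
      (fun k => L0inv_wt_le hΘ f k) (hf.mul_left _)
  refine ⟨hs, ?_⟩
  calc ∑' k, wt Θ k * ‖L0inv Θ f k‖ ≤ ∑' k, 3/2 * ‖f k‖ :=
        Summable.tsum_le_tsum (fun k => L0inv_wt_le hΘ f k) hs (hf.mul_left _)
    _ = 3/2 * ∑' k, ‖f k‖ := tsum_mul_left

end EllAux

namespace EllAux

section Core

variable {χ Θ σ : ℝ}
variable {h : Coeffs}

/-- `h` is absolutely summable. -/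
lemma hl1 (h0 : h 0 = 0) (hh1 : Summable fun m : ℤ => |(m:ℝ)| * ‖h m‖) :
    Summable fun m => ‖h m‖ := by
  refine Summable.of_nonneg_of_le (fun m => norm_nonneg _) ?_ hh1
  intro m
  rcases eq_or_ne m 0 with rfl | hm
  · rw [h0]; simp
  · have h1 : (1:ℝ) ≤ |(m:ℝ)| := by
      rw [← Int.cast_abs]; exact_mod_cast Int.one_le_abs hm
    nlinarith [norm_nonneg (h m)]

/-- cube summability from weighted summability -/
lemma cube_summable (hΘ : 0 < Θ) {V : Coeffs}
    (hV : Summable fun k => wt Θ k * ‖V k‖) :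
    Summable fun j : ℤ => |(j:ℝ)|^(3:ℕ) * ‖V j‖ := by
  refine Summable.of_nonneg_of_le (fun j => by positivity) ?_ (hV.mul_left (2/(Θ*Real.tanh 1)))
  intro j
  calc |(j:ℝ)|^(3:ℕ) * ‖V j‖
      ≤ (2/(Θ*Real.tanh 1) * wt Θ j) * ‖V j‖ :=
        mul_le_mul_of_nonneg_right (cube_le_wt hΘ j) (norm_nonneg _)
    _ = 2/(Θ*Real.tanh 1) * (wt Θ j * ‖V j‖) := by ring

lemma cube_tsum_le (hΘ : 0 < Θ) {V : Coeffs}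
    (hV : Summable fun k => wt Θ k * ‖V k‖) :
    ∑' j : ℤ, |(j:ℝ)|^(3:ℕ) * ‖V j‖
      ≤ 2/(Θ*Real.tanh 1) * ∑' k, wt Θ k * ‖V k‖ := by
  calc ∑' j : ℤ, |(j:ℝ)|^(3:ℕ) * ‖V j‖
      ≤ ∑' j, 2/(Θ*Real.tanh 1) * (wt Θ j * ‖V j‖) := by
        refine Summable.tsum_le_tsum ?_ (cube_summable hΘ hV) (hV.mul_left _)
        intro j
        calc |(j:ℝ)|^(3:ℕ) * ‖V j‖
            ≤ (2/(Θ*Real.tanh 1) * wt Θ j) * ‖V j‖ :=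
              mul_le_mul_of_nonneg_right (cube_le_wt hΘ j) (norm_nonneg _)
          _ = 2/(Θ*Real.tanh 1) * (wt Θ j * ‖V j‖) := by ring
    _ = 2/(Θ*Real.tanh 1) * ∑' k, wt Θ k * ‖V k‖ := tsum_mul_left

/-- The key pointwise bound on symbol-series terms. -/
lemma symb3_term_bound (h0 : h 0 = 0) {V : Coeffs} (k m : ℤ) :
    ‖((symb3 k m : ℝ):ℂ) * (h m * V (k - m))‖
      ≤ (4 * (|(m:ℝ)| * ‖h m‖)) * (|((k-m:ℤ):ℝ)|^(3:ℕ) * ‖V (k-m)‖) := by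
  rcases eq_or_ne m 0 with rfl | hm
  · rw [h0]
    simp
  · rw [norm_mul, norm_mul, Complex.norm_real, Real.norm_eq_abs]
    have hb := symb3_bound k m hm
    have hcr : ((k - m : ℤ) : ℝ) = (k:ℝ) - (m:ℝ) := by push_cast; ring
    calc |symb3 k m| * (‖h m‖ * ‖V (k-m)‖)
        ≤ (4 * |(m:ℝ)| * |(k:ℝ)-(m:ℝ)|^(3:ℕ)) * (‖h m‖ * ‖V (k-m)‖) := by
          apply mul_le_mul_of_nonneg_right hb
          positivity
      _ = (4 * (|(m:ℝ)| * ‖h m‖)) * (|((k-m:ℤ):ℝ)|^(3:ℕ) * ‖V (k-m)‖) := by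
          rw [hcr]; ring

/-- Master estimate for the interaction series. -/
lemma Iop_master (hΘ : 0 < Θ) (h0 : h 0 = 0)
    (hh1 : Summable fun m : ℤ => |(m:ℝ)| * ‖h m‖)
    {V : Coeffs} (hV : Summable fun k => wt Θ k * ‖V k‖) :
    (∀ k, Iop h V k = ∑' m, ((symb3 k m : ℝ):ℂ) * (h m * V (k - m))) ∧
    (∀ k, Summable fun m => ((symb3 k m : ℝ):ℂ) * (h m * V (k - m))) ∧
    (Summable fun k => ‖Iop h V k‖) ∧
    ∑' k, ‖Iop h V k‖
      ≤ 8/(Θ*Real.tanh 1) * ((∑' m : ℤ, |(m:ℝ)| * ‖h m‖)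
          * ∑' k, wt Θ k * ‖V k‖) := by
  have ht1 := tanh_one_pos
  have hA3 := cube_summable hΘ hV
  have hA3le := cube_tsum_le hΘ hV
  have hBdd : ∀ j : ℤ, |(j:ℝ)|^(3:ℕ) * ‖V j‖
      ≤ ∑' j : ℤ, |(j:ℝ)|^(3:ℕ) * ‖V j‖ :=
    fun j => Summable.le_tsum hA3 j (fun _ _ => by positivity)
  have hrepr := fun k => Iop_repr h V (hl1 h0 hh1) _ hBdd k
  obtain ⟨hsummF, hSF, hbd⟩ := est0 (fun k m => ((symb3 k m : ℝ):ℂ) * (h m * V (k - m)))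
    (fun m => 4 * (|(m:ℝ)| * ‖h m‖))
    (fun j : ℤ => |(j:ℝ)|^(3:ℕ) * ‖V j‖)
    (hh1.mul_left 4) hA3 (fun m => by positivity) (fun j => by positivity)
    (fun k m => symb3_term_bound h0 k m)
  have hSF' : Summable fun k => ‖Iop h V k‖ := by
    apply hSF.congr
    intro k
    rw [hrepr k]
  refine ⟨hrepr, hsummF, hSF', ?_⟩
  have e1 : ∑' k, ‖Iop h V k‖
      = ∑' k, ‖∑' m, ((symb3 k m : ℝ):ℂ) * (h m * V (k - m))‖ :=
    tsum_congr fun k => by rw [hrepr k]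
  rw [e1]
  calc ∑' k, ‖∑' m, ((symb3 k m : ℝ):ℂ) * (h m * V (k - m))‖
      ≤ (∑' m : ℤ, 4 * (|(m:ℝ)| * ‖h m‖)) * ∑' j : ℤ, |(j:ℝ)|^(3:ℕ) * ‖V j‖ :=
        hbd
    _ = 4 * (∑' m : ℤ, |(m:ℝ)| * ‖h m‖) * ∑' j : ℤ, |(j:ℝ)|^(3:ℕ) * ‖V j‖ := by
        rw [tsum_mul_left]
    _ ≤ 4 * (∑' m : ℤ, |(m:ℝ)| * ‖h m‖)
          * (2/(Θ*Real.tanh 1) * ∑' k, wt Θ k * ‖V k‖) := by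
        apply mul_le_mul_of_nonneg_left hA3le
        have : (0:ℝ) ≤ ∑' m : ℤ, |(m:ℝ)| * ‖h m‖ :=
          tsum_nonneg fun m => by positivity
        linarith
    _ = 8/(Θ*Real.tanh 1) * ((∑' m : ℤ, |(m:ℝ)| * ‖h m‖)
          * ∑' k, wt Θ k * ‖V k‖) := by
        field_simp
        ring

/-- Estimate for the right-hand side `Nop`. -/
lemma Nop_est (hχ : 0 < χ) (hσ : 0 < σ) (h0 : h 0 = 0)
    (hh1 : Summable fun m : ℤ => |(m:ℝ)| * ‖h m‖) :
    (Summable fun k => ‖Nop χ σ h k‖) ∧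
    ∑' k, ‖Nop χ σ h k‖
      ≤ χ * (∑' m : ℤ, |(m:ℝ)| * ‖h m‖)
        + 4 * σ * χ * (∑' m : ℤ, |(m:ℝ)| * ‖h m‖)^2 := by
  set H1 := ∑' m : ℤ, |(m:ℝ)| * ‖h m‖ with hH1
  have hH1nn : 0 ≤ H1 := tsum_nonneg fun m => by positivity
  have hBdd : ∀ j : ℤ, |(j:ℝ)| * ‖h j‖ ≤ H1 :=
    fun j => Summable.le_tsum hh1 j (fun _ _ => by positivity)
  have hquad := fun k => Nquad_repr h (hl1 h0 hh1) H1 hBdd k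
  -- symbol-series bound for quadratic part
  have hterm : ∀ k m : ℤ, ‖((- symb1 k m : ℝ):ℂ) * (h m * h (k - m))‖
      ≤ (4 * (|(m:ℝ)| * ‖h m‖)) * (|((k-m:ℤ):ℝ)| * ‖h (k-m)‖) := by
    intro k m
    rcases eq_or_ne m 0 with rfl | hm
    · rw [h0]; simp
    · rw [norm_mul, norm_mul, Complex.norm_real, Real.norm_eq_abs, abs_neg]
      have hb := symb1_bound k m hm
      have hcr : ((k - m : ℤ) : ℝ) = (k:ℝ) - (m:ℝ) := by push_cast; ring
      calc |symb1 k m| * (‖h m‖ * ‖h (k-m)‖)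
          ≤ (4 * |(m:ℝ)| * |(k:ℝ)-(m:ℝ)|) * (‖h m‖ * ‖h (k-m)‖) := by
            apply mul_le_mul_of_nonneg_right hb
            positivity
        _ = _ := by rw [hcr]; ring
  obtain ⟨hsummF, hSF, hbd⟩ := est0 (fun k m => ((- symb1 k m : ℝ):ℂ) * (h m * h (k - m)))
    (fun m => 4 * (|(m:ℝ)| * ‖h m‖))
    (fun j : ℤ => |(j:ℝ)| * ‖h j‖)
    (hh1.mul_left 4) hh1 (fun m => by positivity) (fun j => by positivity) hterm
  -- linear part
  have hlin : ∀ k : ℤ, ‖-(χ:ℂ) * G0 h k‖ ≤ χ * (|(k:ℝ)| * ‖h k‖) := by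
    intro k
    rw [norm_mul, norm_neg, Complex.norm_real, Real.norm_eq_abs, abs_of_pos hχ, G0, norm_mul,
      Complex.norm_real, Real.norm_eq_abs, abs_of_nonneg (gsym_nonneg _)]
    have := mul_le_mul_of_nonneg_right (gsym_le ((k:ℝ))) (norm_nonneg (h k))
    nlinarith [norm_nonneg (h k)]
  have hlinS : Summable fun k => ‖-(χ:ℂ) * G0 h k‖ :=
    Summable.of_nonneg_of_le (fun k => norm_nonneg _) hlin (hh1.mul_left χ)
  -- quadratic part with prefactor
  have hquadS : Summable fun k => ‖((σ*χ:ℝ):ℂ)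
      * (G0 (conv h (G0 h)) k + Dx 1 (conv h (Dx 1 h)) k)‖ := by
    apply (hSF.mul_left (σ*χ)).congr
    intro k
    rw [hquad k, norm_mul, Complex.norm_real, Real.norm_eq_abs,
      abs_of_pos (show (0:ℝ) < σ*χ by positivity)]
  have hsplit : ∀ k, ‖Nop χ σ h k‖
      ≤ ‖-(χ:ℂ) * G0 h k‖
        + ‖((σ*χ:ℝ):ℂ) * (G0 (conv h (G0 h)) k + Dx 1 (conv h (Dx 1 h)) k)‖ := by
    intro k
    have hN : Nop χ σ h k = -(χ:ℂ) * G0 h k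
        + ((σ*χ:ℝ):ℂ) * (G0 (conv h (G0 h)) k + Dx 1 (conv h (Dx 1 h)) k) := rfl
    rw [hN]
    exact norm_add_le _ _
  have hNsum : Summable fun k => ‖Nop χ σ h k‖ :=
    Summable.of_nonneg_of_le (fun k => norm_nonneg _) hsplit (hlinS.add hquadS)
  refine ⟨hNsum, ?_⟩
  calc ∑' k, ‖Nop χ σ h k‖
      ≤ ∑' k, (‖-(χ:ℂ) * G0 h k‖
          + ‖((σ*χ:ℝ):ℂ) * (G0 (conv h (G0 h)) k + Dx 1 (conv h (Dx 1 h)) k)‖) :=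
        Summable.tsum_le_tsum hsplit hNsum (hlinS.add hquadS)
    _ = (∑' k, ‖-(χ:ℂ) * G0 h k‖)
          + ∑' k, ‖((σ*χ:ℝ):ℂ) * (G0 (conv h (G0 h)) k + Dx 1 (conv h (Dx 1 h)) k)‖ :=
        Summable.tsum_add hlinS hquadS
    _ ≤ χ * H1 + (σ*χ) * (4 * H1 * H1) := by
        apply add_le_add
        · calc ∑' k, ‖-(χ:ℂ) * G0 h k‖
              ≤ ∑' k : ℤ, χ * (|(k:ℝ)| * ‖h k‖) :=
                Summable.tsum_le_tsum hlin hlinS (hh1.mul_left χ)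
            _ = χ * H1 := tsum_mul_left
        · have e2 : ∀ k, ‖((σ*χ:ℝ):ℂ)
              * (G0 (conv h (G0 h)) k + Dx 1 (conv h (Dx 1 h)) k)‖
              = (σ*χ) * ‖∑' m, ((- symb1 k m : ℝ):ℂ) * (h m * h (k - m))‖ := by
            intro k
            rw [norm_mul, Complex.norm_real, Real.norm_eq_abs, abs_of_pos (by positivity), hquad k]
          calc ∑' k, ‖((σ*χ:ℝ):ℂ)
                * (G0 (conv h (G0 h)) k + Dx 1 (conv h (Dx 1 h)) k)‖
              = ∑' k, (σ*χ) * ‖∑' m, ((- symb1 k m : ℝ):ℂ) * (h m * h (k - m))‖ :=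
                tsum_congr e2
            _ = (σ*χ) * ∑' k, ‖∑' m, ((- symb1 k m : ℝ):ℂ) * (h m * h (k - m))‖ :=
                tsum_mul_left
            _ ≤ (σ*χ) * ((∑' m : ℤ, 4 * (|(m:ℝ)| * ‖h m‖)) * H1) := by
                apply mul_le_mul_of_nonneg_left _ (by positivity)
                exact hbd
            _ = (σ*χ) * (4 * H1 * H1) := by rw [tsum_mul_left]
    _ = χ * H1 + 4 * σ * χ * H1^2 := by ring

end Core

end EllAux

namespace EllAux

/-- one application of the fixed-point map (without the constant term) -/
def Tmap (Θ σ : ℝ) (h V : Coeffs) : Coeffs := fun k => -((σ*Θ:ℝ):ℂ) * L0inv Θ (Iop h V) k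

section Core2

variable {χ Θ σ : ℝ} {h : Coeffs}

lemma half_step (hΘ : 0 < Θ) (hσ : 0 < σ) (h0 : h 0 = 0)
    (hh1 : Summable fun m : ℤ => |(m:ℝ)| * ‖h m‖)
    (hsmall : (∑' m : ℤ, |(m:ℝ)| * ‖h m‖) ≤ Real.tanh 1 / (24 * σ))
    {V : Coeffs} (hV : Summable fun k => wt Θ k * ‖V k‖) :
    (Summable fun k => wt Θ k * ‖Tmap Θ σ h V k‖) ∧
    ∑' k, wt Θ k * ‖Tmap Θ σ h V k‖
      ≤ 1/2 * ∑' k, wt Θ k * ‖V k‖ := by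
  have ht1 := tanh_one_pos
  obtain ⟨hrepr, hsummF, hS, hbd⟩ := Iop_master hΘ h0 hh1 hV
  obtain ⟨hgS, hgbd⟩ := L0inv_gain hΘ (Iop h V) hS
  set H1 := ∑' m : ℤ, |(m:ℝ)| * ‖h m‖ with hH1
  set NXV := ∑' k, wt Θ k * ‖V k‖ with hNXV
  have hNXVnn : 0 ≤ NXV := tsum_nonneg fun k => mul_nonneg (wt_pos hΘ k).le (norm_nonneg _)
  have habs : ∀ k, wt Θ k * ‖Tmap Θ σ h V k‖
      = (σ*Θ) * (wt Θ k * ‖L0inv Θ (Iop h V) k‖) := by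
    intro k
    rw [Tmap, norm_mul, norm_neg, Complex.norm_real, Real.norm_eq_abs,
      abs_of_pos (show (0:ℝ) < σ*Θ by positivity)]
    ring
  have hsum : Summable fun k => wt Θ k * ‖Tmap Θ σ h V k‖ := by
    apply (hgS.mul_left (σ*Θ)).congr
    intro k
    rw [habs k]
  refine ⟨hsum, ?_⟩
  have harith : σ*Θ * (3/2 * (8/(Θ*Real.tanh 1) * (Real.tanh 1/(24*σ) * NXV))) = 1/2 * NXV := by
    field_simp
    ring
  calc ∑' k, wt Θ k * ‖Tmap Θ σ h V k‖
      = ∑' k, (σ*Θ) * (wt Θ k * ‖L0inv Θ (Iop h V) k‖) := tsum_congr habs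
    _ = (σ*Θ) * ∑' k, wt Θ k * ‖L0inv Θ (Iop h V) k‖ := tsum_mul_left
    _ ≤ (σ*Θ) * (3/2 * ∑' k, ‖Iop h V k‖) :=
        mul_le_mul_of_nonneg_left hgbd (by positivity)
    _ ≤ (σ*Θ) * (3/2 * (8/(Θ*Real.tanh 1) * (H1 * NXV))) := by
        apply mul_le_mul_of_nonneg_left _ (by positivity)
        apply mul_le_mul_of_nonneg_left hbd (by norm_num)
    _ ≤ (σ*Θ) * (3/2 * (8/(Θ*Real.tanh 1) * (Real.tanh 1/(24*σ) * NXV))) := by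
        apply mul_le_mul_of_nonneg_left _ (by positivity)
        apply mul_le_mul_of_nonneg_left _ (by norm_num)
        apply mul_le_mul_of_nonneg_left _ (by positivity)
        exact mul_le_mul_of_nonneg_right hsmall hNXVnn
    _ = 1/2 * NXV := harith

/-- Any two weighted-summable solutions of `L_h U = N(h)` coincide. -/
lemma two_sols (hΘ : 0 < Θ) (hσ : 0 < σ) (h0 : h 0 = 0)
    (hh1 : Summable fun m : ℤ => |(m:ℝ)| * ‖h m‖)
    (hsmall : (∑' m : ℤ, |(m:ℝ)| * ‖h m‖) ≤ Real.tanh 1 / (24 * σ))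
    {U U' : Coeffs}
    (hU : Summable fun k => wt Θ k * ‖U k‖)
    (hU' : Summable fun k => wt Θ k * ‖U' k‖)
    (hE : ∀ k, Lop Θ σ h U k = Nop χ σ h k)
    (hE' : ∀ k, Lop Θ σ h U' k = Nop χ σ h k) : U' = U := by
  have ht1 := tanh_one_pos
  set D : Coeffs := fun k => U' k - U k with hD
  have hSXD : Summable fun k => wt Θ k * ‖D k‖ := by
    refine Summable.of_nonneg_of_le
      (fun k => mul_nonneg (wt_pos hΘ k).le (norm_nonneg _)) ?_ (hU'.add hU)
    intro k
    have h7 : ‖D k‖ ≤ ‖U' k‖ + ‖U k‖ := by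
      have := norm_sub_le (U' k) (U k)
      simpa using this
    have h8 := (wt_pos hΘ k).le
    nlinarith [norm_nonneg (U' k), norm_nonneg (U k)]
  obtain ⟨hreprU, hsummU, _, _⟩ := Iop_master hΘ h0 hh1 hU
  obtain ⟨hreprU', hsummU', _, _⟩ := Iop_master hΘ h0 hh1 hU'
  obtain ⟨hreprD, hsummD, _, _⟩ := Iop_master hΘ h0 hh1 hSXD
  -- Iop is linear on these solutions
  have hlinIop : ∀ k, Iop h D k = Iop h U' k - Iop h U k := by
    intro k
    rw [hreprD k, hreprU k, hreprU' k, ← Summable.tsum_sub (hsummU' k) (hsummU k)]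
    apply tsum_congr
    intro m
    simp only [hD]
    ring
  -- D satisfies the homogeneous equation
  have hDeq : ∀ k, D k = Tmap Θ σ h D k := by
    intro k
    have e3 : Lop Θ σ h U' k - Lop Θ σ h U k = 0 := by rw [hE k, hE' k]; ring
    simp only [Lop, L0] at e3
    have hden : ((1 + Θ * |(k:ℝ)| ^ (3 : ℕ) * Real.tanh |(k:ℝ)| : ℝ) : ℂ) ≠ 0 := by
      rw [Complex.ofReal_ne_zero]
      exact (L0den_pos hΘ k).ne'
    have e4 : ((1 + Θ * |(k:ℝ)| ^ (3 : ℕ) * Real.tanh |(k:ℝ)| : ℝ) : ℂ) * D k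
        = -((σ*Θ:ℝ):ℂ) * Iop h D k := by
      have h5 : Iop h D k = Iop h U' k - Iop h U k := hlinIop k
      have h6 : D k = U' k - U k := rfl
      rw [h5, h6]
      linear_combination e3
    show D k = -((σ*Θ:ℝ):ℂ) * L0inv Θ (Iop h D) k
    simp only [L0inv]
    rw [← mul_div_assoc, eq_div_iff hden]
    linear_combination e4
  have hhalf := half_step hΘ hσ h0 hh1 hsmall hSXD
  have hNXD : ∑' k, wt Θ k * ‖D k‖ ≤ 1/2 * ∑' k, wt Θ k * ‖D k‖ := by
    calc ∑' k, wt Θ k * ‖D k‖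
        = ∑' k, wt Θ k * ‖Tmap Θ σ h D k‖ :=
          tsum_congr fun k => by rw [← hDeq k]
      _ ≤ 1/2 * ∑' k, wt Θ k * ‖D k‖ := hhalf.2
  have hNXDnn : 0 ≤ ∑' k, wt Θ k * ‖D k‖ :=
    tsum_nonneg fun k => mul_nonneg (wt_pos hΘ k).le (norm_nonneg _)
  have hzero : ∑' k, wt Θ k * ‖D k‖ = 0 := by linarith
  funext k
  have hterm : wt Θ k * ‖D k‖ ≤ 0 := by
    rw [← hzero]
    exact Summable.le_tsum hSXD k fun j _ => mul_nonneg (wt_pos hΘ j).le (norm_nonneg _)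
  have : ‖D k‖ = 0 := by
    nlinarith [norm_nonneg (D k), wt_pos hΘ k, one_le_wt hΘ k]
  have hDk : D k = 0 := by
    rwa [norm_eq_zero] at this
  have h9 : U' k - U k = 0 := hDk
  exact sub_eq_zero.mp h9

end Core2

end EllAux

namespace EllAux

section Core3

variable {χ Θ σ : ℝ} {h : Coeffs}

lemma G0_zero (f : Coeffs) : G0 f 0 = 0 := by simp [G0]

lemma Dx1_zero (f : Coeffs) : Dx 1 f 0 = 0 := by simp [Dx]

lemma Iop_zero (hf V : Coeffs) : Iop hf V 0 = 0 := by
  rw [Iop, G0_zero, Dx1_zero]; ring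

lemma Nop_zero : Nop χ σ h 0 = 0 := by
  rw [Nop, G0_zero, G0_zero, Dx1_zero]; ring

lemma L0inv_zero_mode (f : Coeffs) (hf0 : f 0 = 0) : L0inv Θ f 0 = 0 := by
  simp [L0inv, hf0]

end Core3

/-- the Neumann iteration -/
def WIter (χ Θ σ : ℝ) (h : Coeffs) : ℕ → Coeffs
  | 0 => L0inv Θ (Nop χ σ h)
  | (n+1) => Tmap Θ σ h (WIter χ Θ σ h n)

section Core4

variable {χ Θ σ : ℝ} {h : Coeffs}

set_option maxHeartbeats 1000000 in
lemma core (hχ : 0 < χ) (hΘ : 0 < Θ) (hσ : 0 < σ) (h0 : h 0 = 0)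
    (hh1 : Summable fun m : ℤ => |(m:ℝ)| * ‖h m‖)
    (hsmall : (∑' m : ℤ, |(m:ℝ)| * ‖h m‖) ≤ Real.tanh 1 / (24 * σ)) :
    ∃ U : Coeffs, U 0 = 0 ∧ (Summable fun k => wt Θ k * ‖U k‖) ∧
      (∀ k, Lop Θ σ h U k = Nop χ σ h k) ∧
      ∑' k, wt Θ k * ‖U k‖ ≤ 3 * ∑' k, ‖Nop χ σ h k‖ := by
  have ht1 := tanh_one_pos
  obtain ⟨hNS, _⟩ := Nop_est hχ hσ h0 hh1
  set W : ℕ → Coeffs := WIter χ Θ σ h with hWdef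
  have hW0 : W 0 = L0inv Θ (Nop χ σ h) := rfl
  have hWs : ∀ n, W (n+1) = Tmap Θ σ h (W n) := fun n => rfl
  set M : ℝ := 3/2 * ∑' k, ‖Nop χ σ h k‖ with hM
  have hNopnn : 0 ≤ ∑' k, ‖Nop χ σ h k‖ :=
    tsum_nonneg fun k => norm_nonneg _
  have hMnn : 0 ≤ M := by rw [hM]; linarith
  obtain ⟨hS0, hb0⟩ := L0inv_gain hΘ (Nop χ σ h) hNS
  have hind : ∀ n, (Summable fun k => wt Θ k * ‖W n k‖) ∧
      ∑' k, wt Θ k * ‖W n k‖ ≤ (1/2:ℝ)^n * M := by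
    intro n
    induction n with
    | zero =>
      refine ⟨hS0, ?_⟩
      rw [pow_zero, one_mul, hM]
      exact hb0
    | succ n ih =>
      obtain ⟨hSn, hbn⟩ := ih
      obtain ⟨hSn1, hbn1⟩ := half_step hΘ hσ h0 hh1 hsmall hSn
      constructor
      · rw [hWs n]; exact hSn1
      · rw [hWs n]
        calc ∑' k, wt Θ k * ‖Tmap Θ σ h (W n) k‖
            ≤ 1/2 * ∑' k, wt Θ k * ‖W n k‖ := hbn1
          _ ≤ 1/2 * ((1/2:ℝ)^n * M) := by linarith
          _ = (1/2:ℝ)^(n+1) * M := by ring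
  have hptw : ∀ n k, wt Θ k * ‖W n k‖ ≤ (1/2:ℝ)^n * M := fun n k =>
    (Summable.le_tsum (hind n).1 k (fun j _ =>
      mul_nonneg (wt_pos hΘ j).le (norm_nonneg _))).trans (hind n).2
  have hgeoM : Summable fun n : ℕ => (1/2:ℝ)^n * M := summable_geometric_two.mul_right M
  have hgeoMsum : ∑' n : ℕ, (1/2:ℝ)^n * M = 2 * M := by
    rw [tsum_mul_right, tsum_geometric_two]
  have hcolk : ∀ k, Summable fun n => wt Θ k * ‖W n k‖ := fun k =>
    Summable.of_nonneg_of_le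
      (fun n => mul_nonneg (wt_pos hΘ k).le (norm_nonneg _))
      (fun n => hptw n k) hgeoM
  have hcolsum : ∀ k, ∑' n, wt Θ k * ‖W n k‖ ≤ 2 * M := by
    intro k
    calc ∑' n, wt Θ k * ‖W n k‖ ≤ ∑' n : ℕ, (1/2:ℝ)^n * M :=
          Summable.tsum_le_tsum (fun n => hptw n k) (hcolk k) hgeoM
      _ = 2 * M := hgeoMsum
  have habsptw : ∀ n k, ‖W n k‖ ≤ wt Θ k * ‖W n k‖ := by
    intro n k
    nlinarith [one_le_wt hΘ k, norm_nonneg (W n k)]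
  have habsk : ∀ k, Summable fun n => ‖W n k‖ := fun k =>
    Summable.of_nonneg_of_le (fun n => norm_nonneg _)
      (fun n => habsptw n k) (hcolk k)
  have hUsum : ∀ k, Summable fun n => W n k := fun k =>
    Summable.of_norm (by exact habsk k)
  set U : Coeffs := fun k => ∑' n, W n k with hU
  have hUk : ∀ k, U k = ∑' n, W n k := fun k => rfl
  -- zero mode
  have hWzero : ∀ n, W n 0 = 0 := by
    intro n
    cases n with
    | zero =>
      rw [hW0]
      exact L0inv_zero_mode _ Nop_zero
    | succ n =>
      rw [hWs n, Tmap, L0inv_zero_mode _ (Iop_zero h (W n))]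
      ring
  have hU0 : U 0 = 0 := by
    rw [hUk 0]
    simp [hWzero]
  -- product summability
  have hP : Summable (fun p : ℕ × ℤ => wt Θ p.2 * ‖W p.1 p.2‖) := by
    rw [summable_prod_of_nonneg
      (fun p => mul_nonneg (wt_pos hΘ p.2).le (norm_nonneg _))]
    refine ⟨fun n => (hind n).1, ?_⟩
    exact Summable.of_nonneg_of_le
      (fun n => tsum_nonneg fun k => mul_nonneg (wt_pos hΘ k).le (norm_nonneg _))
      (fun n => (hind n).2) hgeoM
  have hP' : Summable (fun p : ℤ × ℕ => wt Θ p.1 * ‖W p.2 p.1‖) := hP.prod_symm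
  -- SX U and bound
  have hptU : ∀ k, wt Θ k * ‖U k‖ ≤ ∑' n, wt Θ k * ‖W n k‖ := by
    intro k
    have h1 : ‖U k‖ ≤ ∑' n, ‖W n k‖ := by
      rw [hUk k]
      have := norm_tsum_le_tsum_norm
        (f := fun n => W n k) (by exact habsk k)
      exact this
    calc wt Θ k * ‖U k‖ ≤ wt Θ k * ∑' n, ‖W n k‖ :=
          mul_le_mul_of_nonneg_left h1 (wt_pos hΘ k).le
      _ = ∑' n, wt Θ k * ‖W n k‖ := tsum_mul_left.symm
  have hmarg : Summable fun k => ∑' n, wt Θ k * ‖W n k‖ :=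
    ((summable_prod_of_nonneg
      (fun p : ℤ × ℕ => mul_nonneg (wt_pos hΘ p.1).le (norm_nonneg _))).mp hP').2
  have hSXU : Summable fun k => wt Θ k * ‖U k‖ :=
    Summable.of_nonneg_of_le
      (fun k => mul_nonneg (wt_pos hΘ k).le (norm_nonneg _)) hptU hmarg
  have hNXU : ∑' k, wt Θ k * ‖U k‖ ≤ 2 * M := by
    have e0 : ∑' (p : ℤ × ℕ), wt Θ p.1 * ‖W p.2 p.1‖
        = ∑' (q : ℕ × ℤ), wt Θ q.2 * ‖W q.1 q.2‖ := by
      rw [← (Equiv.prodComm ℕ ℤ).tsum_eq (fun p : ℤ × ℕ => wt Θ p.1 * ‖W p.2 p.1‖)]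
      rfl
    calc ∑' k, wt Θ k * ‖U k‖
        ≤ ∑' k, ∑' n, wt Θ k * ‖W n k‖ := Summable.tsum_le_tsum hptU hSXU hmarg
      _ = ∑' (p : ℤ × ℕ), wt Θ p.1 * ‖W p.2 p.1‖ :=
          (Summable.tsum_prod' hP' (fun k => hP'.prod_factor k)).symm
      _ = ∑' (q : ℕ × ℤ), wt Θ q.2 * ‖W q.1 q.2‖ := e0
      _ = ∑' n, ∑' k, wt Θ k * ‖W n k‖ :=
          Summable.tsum_prod' hP (fun n => hP.prod_factor n)
      _ ≤ ∑' n : ℕ, (1/2:ℝ)^n * M := by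
          refine Summable.tsum_le_tsum (fun n => (hind n).2) ?_ hgeoM
          exact ((summable_prod_of_nonneg
            (fun p : ℕ × ℤ => mul_nonneg (wt_pos hΘ p.2).le (norm_nonneg _))).mp hP).2
      _ = 2 * M := hgeoMsum
  -- the equation
  have hcnz : ((σ*Θ:ℝ):ℂ) ≠ 0 := by
    rw [Complex.ofReal_ne_zero]
    positivity
  have hEq : ∀ k, Lop Θ σ h U k = Nop χ σ h k := by
    intro k
    have hdenpos := L0den_pos hΘ k
    have hden : ((1 + Θ * |(k:ℝ)| ^ (3 : ℕ) * Real.tanh |(k:ℝ)| : ℝ) : ℂ) ≠ 0 := by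
      rw [Complex.ofReal_ne_zero]; exact hdenpos.ne'
    set dc : ℂ := ((1 + Θ * |(k:ℝ)| ^ (3 : ℕ) * Real.tanh |(k:ℝ)| : ℝ) : ℂ) with hdc
    have hAsum : Summable (fun n => dc * W n k) := by
      apply Summable.of_norm
      refine Summable.of_nonneg_of_le (fun n => norm_nonneg _) ?_
        (hgeoM.mul_left (‖dc‖))
      intro n
      simp only [norm_mul]
      have h2 : ‖W n k‖ ≤ (1/2:ℝ)^n * M :=
        (habsptw n k).trans (hptw n k)
      exact mul_le_mul_of_nonneg_left h2 (norm_nonneg _)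
    have key1 : ∀ n, ((σ*Θ:ℝ):ℂ) * Iop h (W n) k = - (dc * W (n+1) k) := by
      intro n
      have e1 : W (n+1) k = -((σ*Θ:ℝ):ℂ) * (Iop h (W n) k / dc) := by
        rw [hWs n]
        simp only [Tmap, L0inv]
        rfl
      rw [e1]
      field_simp
    have hIopS : Summable fun n => Iop h (W n) k := by
      have h1 : Summable fun n => dc * W (n+1) k := (summable_nat_add_iff 1).mpr hAsum
      have h2 : Summable fun n => -(((σ*Θ:ℝ):ℂ))⁻¹ * (dc * W (n+1) k) := h1.mul_left _
      apply h2.congr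
      intro n
      have h3 : dc * W (n+1) k = -(((σ*Θ:ℝ):ℂ) * Iop h (W n) k) := by
        linear_combination key1 n
      rw [h3, neg_mul_neg, ← mul_assoc, inv_mul_cancel₀ hcnz, one_mul]
    -- Fubini for Iop
    have hreprU := (Iop_master hΘ h0 hh1 hSXU).1 k
    have hreprW : ∀ n, Iop h (W n) k
        = ∑' m, ((symb3 k m : ℝ):ℂ) * (h m * W n (k - m)) :=
      fun n => (Iop_master hΘ h0 hh1 (hind n).1).1 k
    have hgS : Summable (fun p : ℤ × ℕ =>
        ((symb3 k p.1 : ℝ):ℂ) * (h p.1 * W p.2 (k - p.1))) := by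
      apply Summable.of_norm
      have hmaj0 : ∀ p : ℤ × ℕ, (0:ℝ) ≤ (4 * (|(p.1:ℝ)| * ‖h p.1‖))
          * (2/(Θ*Real.tanh 1) * (wt Θ (k-p.1) * ‖W p.2 (k-p.1)‖)) := by
        intro p
        have := (wt_pos hΘ (k-p.1)).le
        positivity
      have hmajS : Summable (fun p : ℤ × ℕ => (4 * (|(p.1:ℝ)| * ‖h p.1‖))
          * (2/(Θ*Real.tanh 1) * (wt Θ (k-p.1) * ‖W p.2 (k-p.1)‖))) := by
        rw [summable_prod_of_nonneg hmaj0]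
        constructor
        · intro m
          refine (((hcolk (k-m)).mul_left (2/(Θ*Real.tanh 1))).mul_left
            (4 * (|(m:ℝ)| * ‖h m‖))).congr (fun n => ?_)
          ring
        · refine Summable.of_nonneg_of_le
            (fun m => tsum_nonneg fun n => hmaj0 (m, n)) ?_
            (hh1.mul_left (4 * (2/(Θ*Real.tanh 1) * (2*M))))
          intro m
          have e2 : ∑' n, (4 * (|(m:ℝ)| * ‖h m‖))
              * (2/(Θ*Real.tanh 1) * (wt Θ (k-m) * ‖W n (k-m)‖))
              = (4 * (|(m:ℝ)| * ‖h m‖))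
              * (2/(Θ*Real.tanh 1) * ∑' n, wt Θ (k-m) * ‖W n (k-m)‖) := by
            rw [← tsum_mul_left, ← tsum_mul_left]
          rw [e2]
          have h3 := hcolsum (k-m)
          have h5 : (0:ℝ) ≤ 2/(Θ*Real.tanh 1) := by positivity
          have h6 : 2/(Θ*Real.tanh 1) * (∑' n, wt Θ (k-m) * ‖W n (k-m)‖)
              ≤ 2/(Θ*Real.tanh 1) * (2*M) := mul_le_mul_of_nonneg_left h3 h5
          calc (4 * (|(m:ℝ)| * ‖h m‖))
              * (2/(Θ*Real.tanh 1) * ∑' n, wt Θ (k-m) * ‖W n (k-m)‖)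
              ≤ (4 * (|(m:ℝ)| * ‖h m‖)) * (2/(Θ*Real.tanh 1) * (2*M)) := by
                apply mul_le_mul_of_nonneg_left h6
                positivity
            _ = (4 * (2/(Θ*Real.tanh 1) * (2*M))) * (|(m:ℝ)| * ‖h m‖) := by
                ring
      refine Summable.of_nonneg_of_le (fun p => norm_nonneg _) ?_ hmajS
      intro p
      calc ‖((symb3 k p.1 : ℝ):ℂ) * (h p.1 * W p.2 (k - p.1))‖
          ≤ (4 * (|(p.1:ℝ)| * ‖h p.1‖))
            * (|((k-p.1:ℤ):ℝ)|^(3:ℕ) * ‖W p.2 (k-p.1)‖) :=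
            symb3_term_bound h0 k p.1
        _ ≤ _ := by
            have h6 : |((k-p.1:ℤ):ℝ)|^(3:ℕ) * ‖W p.2 (k-p.1)‖
                ≤ 2/(Θ*Real.tanh 1) * (wt Θ (k-p.1) * ‖W p.2 (k-p.1)‖) := by
              have h7 := mul_le_mul_of_nonneg_right (cube_le_wt hΘ (k-p.1))
                (norm_nonneg (W p.2 (k-p.1)))
              calc |((k-p.1:ℤ):ℝ)|^(3:ℕ) * ‖W p.2 (k-p.1)‖
                  ≤ 2/(Θ*Real.tanh 1) * wt Θ (k-p.1) * ‖W p.2 (k-p.1)‖ := h7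
                _ = 2/(Θ*Real.tanh 1) * (wt Θ (k-p.1) * ‖W p.2 (k-p.1)‖) := by
                    ring
            apply mul_le_mul_of_nonneg_left h6
            positivity
    have key2 : Iop h U k = ∑' n, Iop h (W n) k := by
      rw [hreprU]
      have e3 : ∀ m, ((symb3 k m : ℝ):ℂ) * (h m * U (k - m))
          = ∑' n, ((symb3 k m : ℝ):ℂ) * (h m * W n (k - m)) := by
        intro m
        rw [hUk (k - m), ← tsum_mul_left, ← tsum_mul_left]
      have e4 : ∑' m, ((symb3 k m : ℝ):ℂ) * (h m * U (k - m))
          = ∑' m, ∑' n, ((symb3 k m : ℝ):ℂ) * (h m * W n (k - m)) := tsum_congr e3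
      have e5 : ∑' m, ∑' n, ((symb3 k m : ℝ):ℂ) * (h m * W n (k - m))
          = ∑' p : ℤ × ℕ, ((symb3 k p.1 : ℝ):ℂ) * (h p.1 * W p.2 (k - p.1)) :=
        (Summable.tsum_prod' hgS (fun m => hgS.prod_factor m)).symm
      have hgS2 : Summable (fun q : ℕ × ℤ =>
          ((symb3 k q.2 : ℝ):ℂ) * (h q.2 * W q.1 (k - q.2))) := by
        have := hgS.prod_symm
        exact this.congr (fun q => rfl)
      have e6 : ∑' q : ℕ × ℤ, ((symb3 k q.2 : ℝ):ℂ) * (h q.2 * W q.1 (k - q.2))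
          = ∑' p : ℤ × ℕ, ((symb3 k p.1 : ℝ):ℂ) * (h p.1 * W p.2 (k - p.1)) := by
        have := (Equiv.prodComm ℕ ℤ).tsum_eq
          (fun p : ℤ × ℕ => ((symb3 k p.1 : ℝ):ℂ) * (h p.1 * W p.2 (k - p.1)))
        exact this
      have e7 : ∑' q : ℕ × ℤ, ((symb3 k q.2 : ℝ):ℂ) * (h q.2 * W q.1 (k - q.2))
          = ∑' n, ∑' m, ((symb3 k m : ℝ):ℂ) * (h m * W n (k - m)) :=
        Summable.tsum_prod' hgS2 (fun n => hgS2.prod_factor n)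
      rw [e4, e5, ← e6, e7]
      exact tsum_congr fun n => (hreprW n).symm
    -- assemble
    have hL0U : L0 Θ U k = ∑' n, dc * W n k := by
      rw [L0, hUk k, ← hdc, ← tsum_mul_left]
    calc Lop Θ σ h U k = L0 Θ U k + ((σ*Θ:ℝ):ℂ) * Iop h U k := rfl
      _ = (∑' n, dc * W n k) + ∑' n, (((σ*Θ:ℝ):ℂ) * Iop h (W n) k) := by
          rw [hL0U, key2, ← tsum_mul_left]
      _ = (∑' n, dc * W n k) + ∑' n, - (dc * W (n+1) k) := by
          congr 1
          exact tsum_congr fun n => key1 n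
      _ = (∑' n, dc * W n k) - ∑' n, dc * W (n+1) k := by
          rw [tsum_neg]; ring
      _ = dc * W 0 k := by
          have := Summable.tsum_eq_zero_add hAsum
          linear_combination this
      _ = Nop χ σ h k := by
          rw [hW0, L0inv, ← hdc, mul_div_cancel₀ _ hden]
  refine ⟨U, hU0, hSXU, hEq, ?_⟩
  calc ∑' k, wt Θ k * ‖U k‖ ≤ 2 * M := hNXU
    _ = 3 * ∑' k, ‖Nop χ σ h k‖ := by rw [hM]; ring

end Core4

end EllAux

namespace EllAux

lemma rpow3_eq (x : ℝ) : |x| ^ (3:ℝ) = |x|^(3:ℕ) := by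
  rw [show (3:ℝ) = ((3:ℕ):ℝ) by norm_num, Real.rpow_natCast]

end EllAux


/-- for zero-mean `h ∈ A¹` small in `A¹`, the equation `L_h U = N(h)` has a
unique zero-mean solution `U ∈ A³`, with
`‖U‖_{A⁰} + (Θ tanh(1)/2)‖U‖_{A³} ≤ C ‖h‖_{A¹}(1 + ‖h‖_{A¹})`. -/
theorem elliptic_solve_Lh (χ Θ σ : ℝ) (hχ : 0 < χ) (hΘ : 0 < Θ) (hσ : 0 < σ) :
    ∃ C₁ > 0, ∃ C > 0, ∀ h : Coeffs, h 0 = 0 → InA 1 h → Anorm 1 h ≤ C₁ →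
      ∃ U : Coeffs,
        (U 0 = 0 ∧ InA 3 U ∧ (∀ k : ℤ, Lop Θ σ h U k = Nop χ σ h k) ∧
          Anorm 0 U + Θ * Real.tanh 1 / 2 * Anorm 3 U ≤
            C * Anorm 1 h * (1 + Anorm 1 h)) ∧
        (∀ U' : Coeffs, U' 0 = 0 → InA 3 U' →
          (∀ k : ℤ, Lop Θ σ h U' k = Nop χ σ h k) → U' = U) := by
  have ht1 := EllAux.tanh_one_pos
  refine ⟨Real.tanh 1 / (24*σ), by positivity, 3*χ*(1+4*σ), by positivity, ?_⟩
  intro h h0 hInA1 hsmall'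
  have hh1 : Summable fun m : ℤ => |(m:ℝ)| * ‖h m‖ :=
    hInA1.congr (fun k => by rw [Real.rpow_one])
  have hH1eq : Anorm 1 h = ∑' m : ℤ, |(m:ℝ)| * ‖h m‖ :=
    tsum_congr fun k => by rw [Real.rpow_one]
  have hH1nn : 0 ≤ Anorm 1 h := by
    rw [hH1eq]; exact tsum_nonneg fun m => by positivity
  have hsmall : ∑' m : ℤ, |(m:ℝ)| * ‖h m‖ ≤ Real.tanh 1 / (24*σ) := by
    rw [← hH1eq]; exact hsmall'
  obtain ⟨U, hU0, hSXU, hEq, hbnd⟩ := EllAux.core hχ hΘ hσ h0 hh1 hsmall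
  obtain ⟨hNS, hNople⟩ := EllAux.Nop_est hχ hσ h0 hh1
  have hcube := EllAux.cube_summable hΘ hSXU
  have hS0U : Summable fun k => ‖U k‖ := by
    refine Summable.of_nonneg_of_le (fun k => norm_nonneg _) ?_ hSXU
    intro k
    nlinarith [EllAux.one_le_wt hΘ k, norm_nonneg (U k)]
  have hInA3 : InA 3 U := hcube.congr (fun k => by rw [EllAux.rpow3_eq])
  refine ⟨U, ⟨hU0, hInA3, hEq, ?_⟩, ?_⟩
  · -- the bound
    have hA0 : Anorm 0 U = ∑' k : ℤ, ‖U k‖ :=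
      tsum_congr fun k => by rw [Real.rpow_zero, one_mul]
    have hA3 : Anorm 3 U = ∑' k : ℤ, |(k:ℝ)|^(3:ℕ) * ‖U k‖ :=
      tsum_congr fun k => by rw [EllAux.rpow3_eq]
    have hsplit : ∑' k, EllAux.wt Θ k * ‖U k‖
        = (∑' k : ℤ, ‖U k‖)
          + Θ * Real.tanh 1 / 2 * ∑' k : ℤ, |(k:ℝ)|^(3:ℕ) * ‖U k‖ := by
      rw [← tsum_mul_left, ← Summable.tsum_add hS0U (hcube.mul_left _)]
      exact tsum_congr fun k => by rw [EllAux.wt]; ring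
    rw [hA0, hA3, ← hsplit]
    have hfin : 3 * (χ * Anorm 1 h + 4*σ*χ*(Anorm 1 h)^2)
        ≤ 3*χ*(1+4*σ) * Anorm 1 h * (1 + Anorm 1 h) := by
      nlinarith [hH1nn, sq_nonneg (Anorm 1 h), hχ.le, hσ.le,
        mul_nonneg hχ.le hH1nn, mul_nonneg (mul_nonneg hσ.le hχ.le) hH1nn]
    calc ∑' k, EllAux.wt Θ k * ‖U k‖
        ≤ 3 * ∑' k, ‖Nop χ σ h k‖ := hbnd
      _ ≤ 3 * (χ * (∑' m : ℤ, |(m:ℝ)| * ‖h m‖)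
            + 4*σ*χ*(∑' m : ℤ, |(m:ℝ)| * ‖h m‖)^2) := by linarith
      _ = 3 * (χ * Anorm 1 h + 4*σ*χ*(Anorm 1 h)^2) := by rw [hH1eq]
      _ ≤ 3*χ*(1+4*σ) * Anorm 1 h * (1 + Anorm 1 h) := hfin
  · -- uniqueness
    intro U' hU'0 hInA3' hEq'
    have hS3' : Summable fun k : ℤ => |(k:ℝ)|^(3:ℕ) * ‖U' k‖ :=
      hInA3'.congr (fun k => by rw [EllAux.rpow3_eq])
    have hS0' : Summable fun k => ‖U' k‖ := by
      refine Summable.of_nonneg_of_le (fun k => norm_nonneg _) ?_ hS3'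
      intro k
      rcases eq_or_ne k 0 with rfl | hk
      · rw [hU'0]; simp
      · have h1 : (1:ℝ) ≤ |(k:ℝ)| := by
          rw [← Int.cast_abs]; exact_mod_cast Int.one_le_abs hk
        nlinarith [norm_nonneg (U' k), pow_le_pow_left₀ (by norm_num : (0:ℝ) ≤ 1)
          h1 3]
    have hSXU' : Summable fun k => EllAux.wt Θ k * ‖U' k‖ := by
      apply (hS0'.add (hS3'.mul_left (Θ * Real.tanh 1 / 2))).congr
      intro k
      rw [EllAux.wt]; ring
    exact EllAux.two_sols hΘ hσ h0 hh1 hsmall hSXU hSXU' hEq hEq'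
end
end
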